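/- arXiv:1605.08180 — 4 statements merged into one kernel-verified Lean document; each statement's English description precedes it below -/
import Mathlib

section
/- Let (P(t))_{t≥0} satisfy: positive diagonals, |P(t)| row-stochastic, nonzero entries bounded below in modulus by γ ∈ (0,1). Let V^s be the root vertex set of the union of all graphs G(P(t)) over [0,∞). Assume: (i) there is a bipartition of V^s into two nonempty subsets such that for every t, edges of G(P(t)) between the subsets are negative and edges within each subset are positive; (ii) there is an infinite sequence of uniformly bounded intervals over each of which the union of the graphs contains a spanning tree with root vertex set equal to V^s. Then the agents in V^s polarize to values C and −C, and for every other agent i, limsup_{t→∞} |x_i(t)| ≤ |C|. -/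
set_option linter.unusedSectionVars false
set_option maxHeartbeats 1000000

open Matrix Filter MeasureTheory

def traj {N : ℕ} (P : ℕ → Matrix (Fin N) (Fin N) ℝ) (x0 : Fin N → ℝ) :
    ℕ → Fin N → ℝ
  | 0 => x0
  | t + 1 => P t *ᵥ traj P x0 t

section Aux
variable {N : ℕ} (P : ℕ → Matrix (Fin N) (Fin N) ℝ)

/-- entrywise absolute value of `P t` -/
def Amat (t : ℕ) : Matrix (Fin N) (Fin N) ℝ := fun i j => |P t i j|

/-- product `A (a+n-1) * ⋯ * A a` -/
def prodA (a : ℕ) : ℕ → Matrix (Fin N) (Fin N) ℝ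
  | 0 => 1
  | n + 1 => Amat P (a + n) * prodA a n

lemma mul_entry_nonneg {M Q : Matrix (Fin N) (Fin N) ℝ}
    (hM : ∀ i j, 0 ≤ M i j) (hQ : ∀ i j, 0 ≤ Q i j) (i j : Fin N) :
    0 ≤ (M * Q) i j := by
  rw [Matrix.mul_apply]
  exact Finset.sum_nonneg fun k _ => mul_nonneg (hM i k) (hQ k j)

lemma le_mul_entry {M Q : Matrix (Fin N) (Fin N) ℝ}
    (hM : ∀ i j, 0 ≤ M i j) (hQ : ∀ i j, 0 ≤ Q i j) (k i j : Fin N) :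
    M i k * Q k j ≤ (M * Q) i j := by
  rw [Matrix.mul_apply]
  exact Finset.single_le_sum (f := fun k => M i k * Q k j)
    (fun l _ => mul_nonneg (hM i l) (hQ l j)) (Finset.mem_univ k)

lemma prodA_nonneg (a n : ℕ) (i j : Fin N) : 0 ≤ prodA P a n i j := by
  induction n generalizing i j with
  | zero =>
    simp only [prodA, Matrix.one_apply]
    split <;> norm_num
  | succ n ih =>
    exact mul_entry_nonneg (fun i j => abs_nonneg _) ih i j

lemma prodA_row (habs : ∀ t i, ∑ j, |P t i j| = 1) (a n : ℕ) (i : Fin N) :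
    ∑ j, prodA P a n i j = 1 := by
  induction n generalizing i with
  | zero => simp [prodA, Matrix.one_apply]
  | succ n ih =>
    simp only [prodA, Matrix.mul_apply]
    rw [Finset.sum_comm]
    have : ∀ k ∈ Finset.univ, ∑ j, Amat P (a + n) i k * prodA P a n k j
        = Amat P (a + n) i k := by
      intro k _
      rw [← Finset.mul_sum, ih k, mul_one]
    rw [Finset.sum_congr rfl this]
    exact habs (a + n) i

lemma prodA_split (a m n : ℕ) :
    prodA P a (m + n) = prodA P (a + m) n * prodA P a m := by
  induction n with
  | zero => simp [prodA]
  | succ n ih =>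
    show prodA P a (m + n + 1) = _
    rw [show prodA P a (m + n + 1) = Amat P (a + (m + n)) * prodA P a (m + n) from rfl,
      ih]
    show _ = Amat P (a + m + n) * prodA P (a + m) n * prodA P a m
    rw [show a + m + n = a + (m + n) by omega, ← Matrix.mul_assoc]

lemma gamma_le_diag {γ : ℝ} (hdiag : ∀ t i, 0 < P t i i)
    (hlow : ∀ t i j, P t i j ≠ 0 → γ ≤ |P t i j|) (t : ℕ) (i : Fin N) :
    γ ≤ Amat P t i i :=
  hlow t i i (ne_of_gt (hdiag t i))

lemma prodA_diag {γ : ℝ} (hγ : 0 < γ) (hdiag : ∀ t i, 0 < P t i i)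
    (hlow : ∀ t i j, P t i j ≠ 0 → γ ≤ |P t i j|) (a n : ℕ) (i : Fin N) :
    γ ^ n ≤ prodA P a n i i := by
  induction n with
  | zero => simp [prodA, Matrix.one_apply]
  | succ n ih =>
    calc γ ^ (n + 1) = γ * γ ^ n := by ring
    _ ≤ Amat P (a + n) i i * prodA P a n i i :=
        mul_le_mul (gamma_le_diag P hdiag hlow _ i) ih
          (pow_nonneg hγ.le n) (abs_nonneg _)
    _ ≤ (Amat P (a + n) * prodA P a n) i i :=
        le_mul_entry (fun _ _ => abs_nonneg _) (prodA_nonneg P a n) i i i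

lemma prodA_entry {γ : ℝ} (hγ : 0 < γ) (hdiag : ∀ t i, 0 < P t i i)
    (hlow : ∀ t i j, P t i j ≠ 0 → γ ≤ |P t i j|) {a s n : ℕ} {i j : Fin N}
    (h1 : a ≤ s) (h2 : s < a + n) (hA : γ ≤ |P s i j|) :
    γ ^ n ≤ prodA P a n i j := by
  obtain ⟨m, rfl⟩ := Nat.exists_eq_add_of_le h1
  obtain ⟨n2, hn2⟩ : ∃ n2, n = m + 1 + n2 := ⟨n - m - 1, by omega⟩
  subst hn2
  have h3 : prodA P a (m + 1 + n2) = prodA P (a + m + 1) n2 *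
      (Amat P (a + m) * prodA P a m) := by
    rw [show m + 1 + n2 = (m + 1) + n2 from rfl, prodA_split,
      show prodA P a (m + 1) = Amat P (a + m) * prodA P a m from rfl,
      show a + (m + 1) = a + m + 1 by omega]
  rw [h3]
  have hn1 : ∀ i j, (0:ℝ) ≤ (Amat P (a + m) * prodA P a m) i j :=
    mul_entry_nonneg (fun _ _ => abs_nonneg _) (prodA_nonneg P a m)
  calc γ ^ (m + 1 + n2) = γ ^ n2 * (γ * γ ^ m) := by ring
  _ ≤ prodA P (a + m + 1) n2 i i * (Amat P (a + m) i j * prodA P a m j j) := by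
      apply mul_le_mul (prodA_diag P hγ hdiag hlow _ _ i)
      · exact mul_le_mul hA (prodA_diag P hγ hdiag hlow _ _ j)
          (pow_nonneg hγ.le m) (abs_nonneg _)
      · positivity
      · exact prodA_nonneg P _ _ i i
  _ ≤ prodA P (a + m + 1) n2 i i * (Amat P (a + m) * prodA P a m) i j := by
      apply mul_le_mul_of_nonneg_left _ (prodA_nonneg P _ _ i i)
      exact le_mul_entry (fun _ _ => abs_nonneg _) (prodA_nonneg P a m) j i j
  _ ≤ _ := le_mul_entry (prodA_nonneg P _ _) hn1 i i j


variable {Root : Fin N → Prop}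
  (hRoot : ∀ v, Root v ↔ ∀ w, Relation.ReflTransGen
      (fun j i : Fin N => i ≠ j ∧ ∃ t, P t i j ≠ 0) v w)

include hRoot

lemma root_closure (t : ℕ) {i j : Fin N} (hi : Root i) (hP : P t i j ≠ 0) :
    Root j := by
  by_cases hij : j = i
  · subst hij; exact hi
  · rw [hRoot]
    intro w
    exact Relation.ReflTransGen.head ⟨Ne.symm hij, t, hP⟩ ((hRoot i).1 hi w)

lemma prodA_root_zero (a n : ℕ) {i j : Fin N} (hi : Root i) (hj : ¬ Root j) :
    prodA P a n i j = 0 := by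
  induction n generalizing i with
  | zero =>
    simp only [prodA, Matrix.one_apply]
    rw [if_neg]
    rintro rfl; exact hj hi
  | succ n ih =>
    show (Amat P (a + n) * prodA P a n) i j = 0
    rw [Matrix.mul_apply]
    apply Finset.sum_eq_zero
    intro k _
    by_cases hk : Root k
    · rw [ih hk, mul_zero]
    · have : Amat P (a + n) i k = 0 := by
        by_contra h
        exact hk (root_closure P hRoot (a + n) hi (fun h0 => h (by simp [Amat, h0])))
      rw [this, zero_mul]

variable (f : Fin N → Bool)

/-- gauge vector -/
def Dv (i : Fin N) : ℝ := if f i then 1 else -1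

/-- gauged trajectory -/
def yv (x0 : Fin N → ℝ) (t : ℕ) (i : Fin N) : ℝ := Dv f i * traj P x0 t i

omit hRoot in
lemma Dv_sq (i : Fin N) : Dv f i * Dv f i = 1 := by
  unfold Dv; split <;> norm_num

lemma gauge_eq (hdiag : ∀ t i, 0 < P t i i)
    (hbal : ∀ t i j, Root i → Root j → i ≠ j → P t i j ≠ 0 →
      (f i = f j ↔ 0 < P t i j))
    (t : ℕ) {i : Fin N} (hi : Root i) (j : Fin N) :
    Dv f i * P t i j * Dv f j = |P t i j| := by
  by_cases hP : P t i j = 0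
  · simp [hP]
  by_cases hij : i = j
  · subst hij
    rw [abs_of_pos (hdiag t i)]
    linear_combination (P t i i) * (Dv_sq f i)
  have hj : Root j := root_closure P hRoot t hi hP
  have hb := hbal t i j hi hj hij hP
  by_cases hf : f i = f j
  · have hpos := hb.1 hf
    unfold Dv
    rw [hf]
    rcases f j with _ | _ <;> simp <;> rw [abs_of_pos hpos] <;> ring
  · have hneg : P t i j < 0 := by
      rcases lt_trichotomy (P t i j) 0 with h | h | h
      · exact h
      · exact absurd h hP
      · exact absurd (hb.2 h) hf
    unfold Dv
    rcases hfi : f i with _ | _ <;> rcases hfj : f j with _ | _ <;>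
      simp_all <;> rw [abs_of_neg hneg] <;> ring

lemma y_step (hdiag : ∀ t i, 0 < P t i i)
    (hbal : ∀ t i j, Root i → Root j → i ≠ j → P t i j ≠ 0 →
      (f i = f j ↔ 0 < P t i j))
    (x0 : Fin N → ℝ) (t : ℕ) {i : Fin N} (hi : Root i) :
    yv P f x0 (t + 1) i = ∑ j, |P t i j| * yv P f x0 t j := by
  unfold yv
  show Dv f i * (P t *ᵥ traj P x0 t) i = _
  rw [Matrix.mulVec, dotProduct, Finset.mul_sum]
  apply Finset.sum_congr rfl
  intro j _
  rw [← gauge_eq P hRoot f hdiag hbal t hi j]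
  linear_combination (-(Dv f i * P t i j * traj P x0 t j)) * (Dv_sq f j)

lemma y_prod (hdiag : ∀ t i, 0 < P t i i)
    (hbal : ∀ t i j, Root i → Root j → i ≠ j → P t i j ≠ 0 →
      (f i = f j ↔ 0 < P t i j))
    (x0 : Fin N → ℝ) (a n : ℕ) {i : Fin N} (hi : Root i) :
    yv P f x0 (a + n) i = ∑ j, prodA P a n i j * yv P f x0 a j := by
  induction n generalizing i with
  | zero => simp [prodA, Matrix.one_apply]
  | succ n ih =>
    rw [show a + (n + 1) = (a + n) + 1 by omega,
      y_step P hRoot f hdiag hbal x0 (a + n) hi]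
    have hterm : ∀ j, |P (a + n) i j| * yv P f x0 (a + n) j
        = ∑ k, |P (a + n) i j| * (prodA P a n j k * yv P f x0 a k) := by
      intro j
      by_cases hj : Root j
      · rw [ih hj, Finset.mul_sum]
      · have hz : |P (a + n) i j| = 0 := by
          by_contra h
          exact hj (root_closure P hRoot (a + n) hi (fun h0 => h (by simp [h0])))
        simp [hz]
    rw [Finset.sum_congr rfl (fun j _ => hterm j), Finset.sum_comm]
    apply Finset.sum_congr rfl
    intro k _
    show _ = (Amat P (a + n) * prodA P a n) i k * yv P f x0 a k
    rw [Matrix.mul_apply, Finset.sum_mul]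
    apply Finset.sum_congr rfl
    intro j _
    show |P (a + n) i j| * (prodA P a n j k * yv P f x0 a k)
      = Amat P (a + n) i j * prodA P a n j k * yv P f x0 a k
    rw [Amat]; ring

omit hRoot in
lemma x_abs_le (x0 : Fin N → ℝ) (a n : ℕ) (i : Fin N) :
    |traj P x0 (a + n) i| ≤ ∑ j, prodA P a n i j * |traj P x0 a j| := by
  induction n generalizing i with
  | zero => simp [prodA, Matrix.one_apply]
  | succ n ih =>
    rw [show a + (n + 1) = (a + n) + 1 by omega]
    calc |traj P x0 ((a+n)+1) i| = |∑ j, P (a + n) i j * traj P x0 (a + n) j| := by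
          rw [show traj P x0 ((a+n)+1) = P (a+n) *ᵥ traj P x0 (a+n) from rfl,
            Matrix.mulVec, dotProduct]
    _ ≤ ∑ j, |P (a + n) i j * traj P x0 (a + n) j| := Finset.abs_sum_le_sum_abs _ _
    _ = ∑ j, |P (a + n) i j| * |traj P x0 (a + n) j| := by
          simp [abs_mul]
    _ ≤ ∑ j, |P (a + n) i j| * (∑ k, prodA P a n j k * |traj P x0 a k|) := by
          apply Finset.sum_le_sum
          intro j _
          exact mul_le_mul_of_nonneg_left (ih j) (abs_nonneg _)
    _ = ∑ k, (Amat P (a + n) * prodA P a n) i k * |traj P x0 a k| := by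
          simp_rw [Finset.mul_sum]
          rw [Finset.sum_comm]
          apply Finset.sum_congr rfl
          intro k _
          rw [Matrix.mul_apply, Finset.sum_mul]
          simp [Amat, mul_assoc]
    _ = ∑ j, prodA P a (n + 1) i j * |traj P x0 a j| := rfl


lemma reach {γ : ℝ} (hγ0 : 0 < γ) (hγ1 : γ < 1)
    (hdiag : ∀ t i, 0 < P t i i)
    (hlow : ∀ t i j, P t i j ≠ 0 → γ ≤ |P t i j|)
    (ts : ℕ → ℕ) (B : ℕ) (hmono : ∀ k, ts k < ts (k + 1))
    (hbdd : ∀ k, ts (k + 1) - ts k ≤ B)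
    (hroots : ∀ k v, (∀ w, Relation.ReflTransGen
        (fun j i : Fin N => ∃ s, ts k ≤ s ∧ s < ts (k + 1) ∧ i ≠ j ∧ P s i j ≠ 0) v w)
      ↔ Root v)
    (k : ℕ) {r : Fin N} (hr : Root r) (i : Fin N) :
    γ ^ (N * B) ≤ prodA P (ts k) (ts (k + N) - ts k) i r := by
  classical
  have tsm : StrictMono ts := strictMono_nat_of_lt_succ hmono
  have hts_le : ∀ a b : ℕ, a ≤ b → ts a ≤ ts b := fun a b h => tsm.monotone h
  set T : ℕ → Finset (Fin N) := fun m => Finset.univ.filter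
    (fun i => γ ^ (ts (k + m) - ts k) ≤ prodA P (ts k) (ts (k + m) - ts k) i r)
    with hT
  have memT : ∀ m i, i ∈ T m ↔
      γ ^ (ts (k + m) - ts k) ≤ prodA P (ts k) (ts (k + m) - ts k) i r := by
    intro m i; simp [hT]
  -- key step lemma
  have key : ∀ m i j, γ ^ (ts (k + m + 1) - ts (k + m))
        ≤ prodA P (ts (k + m)) (ts (k + m + 1) - ts (k + m)) i j →
      j ∈ T m → i ∈ T (m + 1) := by
    intro m i j hij hj
    rw [memT] at hj ⊢
    have h1 : ts k ≤ ts (k + m) := hts_le _ _ (Nat.le_add_right _ _)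
    have h2 : ts (k + m) ≤ ts (k + m + 1) := (hmono (k + m)).le
    have hsplit : ts (k + m + 1) - ts k
        = (ts (k + m) - ts k) + (ts (k + m + 1) - ts (k + m)) := by omega
    rw [show k + (m + 1) = k + m + 1 by omega, hsplit, prodA_split,
      show ts k + (ts (k + m) - ts k) = ts (k + m) by omega, pow_add]
    calc γ ^ (ts (k + m) - ts k) * γ ^ (ts (k + m + 1) - ts (k + m))
        ≤ prodA P (ts (k + m)) (ts (k + m + 1) - ts (k + m)) i j
          * prodA P (ts k) (ts (k + m) - ts k) j r := by
          rw [mul_comm (γ ^ (ts (k + m) - ts k))]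
          exact mul_le_mul hij hj (pow_nonneg hγ0.le _) (prodA_nonneg P _ _ _ _)
    _ ≤ _ := le_mul_entry (prodA_nonneg P _ _) (prodA_nonneg P _ _) j i r
  have hsub : ∀ m, T m ⊆ T (m + 1) := by
    intro m j hj
    exact key m j j (prodA_diag P hγ0 hdiag hlow _ _ j) hj
  have hr0 : r ∈ T 0 := by
    rw [memT]
    simp [prodA, Matrix.one_apply]
  have hrm : ∀ m, r ∈ T m := by
    intro m; induction m with
    | zero => exact hr0
    | succ m ih => exact hsub m ih
  -- edge step
  have edge : ∀ m i j, j ∈ T m →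
      (∃ s, ts (k + m) ≤ s ∧ s < ts (k + m + 1) ∧ i ≠ j ∧ P s i j ≠ 0) →
      i ∈ T (m + 1) := by
    rintro m i j hj ⟨s, hs1, hs2, _, hP⟩
    apply key m i j _ hj
    exact prodA_entry P hγ0 hdiag hlow hs1 (by omega) (hlow s i j hP)
  -- crossing lemma
  have cross : ∀ m w, Relation.ReflTransGen
      (fun j i : Fin N => ∃ s, ts (k + m) ≤ s ∧ s < ts (k + m + 1) ∧ i ≠ j ∧ P s i j ≠ 0)
      r w → w ∉ T m → ∃ i, i ∉ T m ∧ i ∈ T (m + 1) := by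
    intro m w hpath
    induction hpath with
    | refl => intro hw; exact absurd (hrm m) hw
    | @tail b c hab hbc ih =>
      intro hw
      by_cases hb : b ∈ T m
      · exact ⟨c, hw, edge m c b hb hbc⟩
      · exact ih hb
  -- cardinality growth
  have grow : ∀ m, T m = Finset.univ ∨ m + 1 ≤ (T m).card := by
    intro m; induction m with
    | zero =>
      by_cases h : T 0 = Finset.univ
      · exact Or.inl h
      · exact Or.inr (Finset.card_pos.2 ⟨r, hr0⟩)
    | succ m ih =>
      by_cases h : T m = Finset.univ
      · left
        apply Finset.eq_univ_of_forall
        intro x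
        exact hsub m (h ▸ Finset.mem_univ x)
      · obtain ⟨w, hw⟩ : ∃ w, w ∉ T m := by
          by_contra hc
          push_neg at hc
          exact h (Finset.eq_univ_of_forall hc)
        have hpath := ((hroots (k + m) r).2 hr) w
        obtain ⟨i, hi1, hi2⟩ := cross m w hpath hw
        have hcard : (T m).card + 1 ≤ (T (m + 1)).card := by
          have : insert i (T m) ⊆ T (m + 1) := by
            intro x hx
            rcases Finset.mem_insert.1 hx with rfl | hx
            · exact hi2
            · exact hsub m hx
          calc (T m).card + 1 = (insert i (T m)).card := (Finset.card_insert_of_notMem hi1).symm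
          _ ≤ _ := Finset.card_le_card this
        rcases ih with h' | h'
        · exact absurd h' h
        · exact Or.inr (by omega)
  have hTN : T N = Finset.univ := by
    rcases grow N with h | h
    · exact h
    · have := Finset.card_le_univ (T N)
      simp at this
      omega
  have hiN : i ∈ T N := hTN ▸ Finset.mem_univ i
  rw [memT] at hiN
  refine le_trans (pow_le_pow_of_le_one hγ0.le hγ1.le ?_) hiN
  -- ts (k + N) - ts k ≤ N * B
  have : ∀ m, ts (k + m) - ts k ≤ m * B := by
    intro m; induction m with
    | zero => simp
    | succ m ih =>
      have h1 : ts k ≤ ts (k + m) := hts_le _ _ (Nat.le_add_right _ _)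
      have h2 := hbdd (k + m)
      have : ts (k + m + 1) - ts (k + m) ≤ B := h2
      have e : k + (m + 1) = k + m + 1 := by omega
      rw [e]
      calc ts (k + m + 1) - ts k ≤ (ts (k + m) - ts k) + B := by omega
      _ ≤ m * B + B := by omega
      _ = (m + 1) * B := by ring
  exact this N


omit hRoot in
lemma conv_le {w v : Fin N → ℝ} {Mx : ℝ} (hw : ∀ j, 0 ≤ w j)
    (hsum : ∑ j, w j = 1) (hv : ∀ j, w j ≠ 0 → v j ≤ Mx) :
    ∑ j, w j * v j ≤ Mx := by
  calc ∑ j, w j * v j ≤ ∑ j, w j * Mx := by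
        apply Finset.sum_le_sum
        intro j _
        by_cases h : w j = 0
        · simp [h]
        · exact mul_le_mul_of_nonneg_left (hv j h) (hw j)
  _ = Mx := by rw [← Finset.sum_mul, hsum, one_mul]

omit hRoot in
lemma conv_pull {w v : Fin N → ℝ} {Mx mr δ : ℝ} (hw : ∀ j, 0 ≤ w j)
    (hsum : ∑ j, w j = 1) (r : Fin N) (hδ0 : 0 ≤ δ) (hδ : δ ≤ w r)
    (hv : ∀ j, w j ≠ 0 → v j ≤ Mx) (hr : v r ≤ mr) (hmM : mr ≤ Mx) :
    ∑ j, w j * v j ≤ Mx - δ * (Mx - mr) := by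
  have hsplit : ∑ j, w j * v j
      = w r * v r + ∑ j ∈ Finset.univ.erase r, w j * v j :=
    (Finset.add_sum_erase _ _ (Finset.mem_univ r)).symm
  have hws : ∑ j ∈ Finset.univ.erase r, w j = 1 - w r := by
    have := (Finset.add_sum_erase _ w (Finset.mem_univ r)).symm
    rw [hsum] at this
    linarith
  have h1 : ∑ j ∈ Finset.univ.erase r, w j * v j ≤ (1 - w r) * Mx := by
    rw [← hws, Finset.sum_mul]
    apply Finset.sum_le_sum
    intro j _
    by_cases h : w j = 0
    · simp [h]
    · exact mul_le_mul_of_nonneg_left (hv j h) (hw j)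
  have h2 : w r * v r ≤ w r * mr := mul_le_mul_of_nonneg_left hr (hw r)
  have h3 : δ * (Mx - mr) ≤ w r * (Mx - mr) :=
    mul_le_mul_of_nonneg_right hδ (by linarith)
  nlinarith [hsplit, h1, h2, h3]

lemma key_all {γ : ℝ} (hγ0 : 0 < γ) (hγ1 : γ < 1)
    (habs : ∀ t i, ∑ j, |P t i j| = 1) (hdiag : ∀ t i, 0 < P t i i)
    (hlow : ∀ t i j, P t i j ≠ 0 → γ ≤ |P t i j|)
    (hbal : ∀ t i j, Root i → Root j → i ≠ j → P t i j ≠ 0 →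
      (f i = f j ↔ 0 < P t i j))
    {rT : Fin N} (hrT : Root rT)
    (ts : ℕ → ℕ) (B : ℕ) (hmono : ∀ k, ts k < ts (k + 1))
    (hbdd : ∀ k, ts (k + 1) - ts k ≤ B)
    (hroots : ∀ k v, (∀ w, Relation.ReflTransGen
        (fun j i : Fin N => ∃ s, ts k ≤ s ∧ s < ts (k + 1) ∧ i ≠ j ∧ P s i j ≠ 0) v w)
      ↔ Root v)
    (x0 : Fin N → ℝ) :
    ∃ C : ℝ, (∀ i, Root i → Tendsto (fun t => yv P f x0 t i) atTop (nhds C)) ∧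
      (∀ i, Filter.limsup (fun t => |traj P x0 t i|) atTop ≤ |C|) := by
  classical
  have hNpos : 0 < N := Fin.pos rT
  have tsm : StrictMono ts := strictMono_nat_of_lt_succ hmono
  set R : Finset (Fin N) := Finset.univ.filter Root with hR
  have hmemR : ∀ i, i ∈ R ↔ Root i := by intro i; simp [hR]
  have hRne : R.Nonempty := ⟨rT, (hmemR rT).2 hrT⟩
  set x : ℕ → Fin N → ℝ := traj P x0 with hxdef
  set y : ℕ → Fin N → ℝ := yv P f x0 with hydef
  have habsyx : ∀ t i, |y t i| = |x t i| := by
    intro t i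
    show |Dv f i * x t i| = |x t i|
    rw [abs_mul]
    unfold Dv
    split <;> simp
  set m : ℕ → ℝ := fun t => R.inf' hRne (y t) with hmdef
  set M : ℕ → ℝ := fun t => R.sup' hRne (y t) with hMdef
  set K : ℕ → ℝ := fun t => Finset.univ.sup'
    (⟨rT, Finset.mem_univ rT⟩ : (Finset.univ : Finset (Fin N)).Nonempty)
    (fun i => |x t i|) with hKdef
  have hmy : ∀ t i, Root i → m t ≤ y t i :=
    fun t i hi => Finset.inf'_le _ ((hmemR i).2 hi)
  have hyM : ∀ t i, Root i → y t i ≤ M t :=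
    fun t i hi => Finset.le_sup' _ ((hmemR i).2 hi)
  have hxK : ∀ t i, |x t i| ≤ K t := by
    intro t i
    rw [hKdef]
    exact Finset.le_sup' (fun j => |x t j|) (Finset.mem_univ i)
  have hK0 : ∀ t, 0 ≤ K t := fun t => le_trans (abs_nonneg _) (hxK t rT)
  have hmM : ∀ t, m t ≤ M t := fun t => le_trans (hmy t rT hrT) (hyM t rT hrT)
  -- weights over one block of N intervals
  set δ : ℝ := γ ^ (N * B) with hδdef
  have hδ0 : 0 < δ := pow_pos hγ0 _
  have hδ1 : δ ≤ 1 := pow_le_one₀ hγ0.le hγ1.le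
  -- step monotonicity of m, M, K
  have hprod1 : ∀ a n i j, 0 ≤ prodA P a n i j := prodA_nonneg P
  have hprodrow : ∀ a n i, ∑ j, prodA P a n i j = 1 := prodA_row P habs
  have hprodsupp : ∀ a n i j, Root i → prodA P a n i j ≠ 0 → Root j := by
    intro a n i j hi h
    by_contra hj
    exact h (prodA_root_zero P hRoot a n hi hj)
  have hyblock : ∀ a n i, Root i → y (a + n) i = ∑ j, prodA P a n i j * y a j :=
    fun a n i hi => y_prod P hRoot f hdiag hbal x0 a n hi
  have hxblock : ∀ a n i, |x (a + n) i| ≤ ∑ j, prodA P a n i j * |x a j| :=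
    fun a n i => x_abs_le P x0 a n i
  have hMblock : ∀ a n, M (a + n) ≤ M a := by
    intro a n
    apply Finset.sup'_le
    intro i hi
    have hi' := (hmemR i).1 hi
    rw [hyblock a n i hi']
    exact conv_le (hprod1 a n i) (hprodrow a n i)
      (fun j hj => hyM a j (hprodsupp a n i j hi' hj))
  have hmblock : ∀ a n, m a ≤ m (a + n) := by
    intro a n
    apply Finset.le_inf'
    intro i hi
    have hi' := (hmemR i).1 hi
    rw [hyblock a n i hi']
    have h1 : ∑ j, prodA P a n i j * (-(y a j)) ≤ -(m a) :=
      conv_le (hprod1 a n i) (hprodrow a n i)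
        (fun j hj => neg_le_neg (hmy a j (hprodsupp a n i j hi' hj)))
    have h2 : ∑ j, prodA P a n i j * (-(y a j)) = -∑ j, prodA P a n i j * y a j := by
      simp [mul_neg]
    linarith [h2 ▸ h1]
  have hKblock : ∀ a n, K (a + n) ≤ K a := by
    intro a n
    apply Finset.sup'_le
    intro i _
    exact le_trans (hxblock a n i)
      (conv_le (hprod1 a n i) (hprodrow a n i) (fun j _ => hxK a j))
  have hmanti : ∀ s t, s ≤ t → M t ≤ M s := by
    intro s t h
    obtain ⟨n, rfl⟩ := Nat.exists_eq_add_of_le h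
    exact hMblock s n
  have hmmono : ∀ s t, s ≤ t → m s ≤ m t := by
    intro s t h
    obtain ⟨n, rfl⟩ := Nat.exists_eq_add_of_le h
    exact hmblock s n
  have hKanti : ∀ s t, s ≤ t → K t ≤ K s := by
    intro s t h
    obtain ⟨n, rfl⟩ := Nat.exists_eq_add_of_le h
    exact hKblock s n
  -- contraction over one super-interval
  have hreach : ∀ k r, Root r → ∀ i,
      δ ≤ prodA P (ts k) (ts (k + N) - ts k) i r :=
    fun k r hr i => reach P hRoot hγ0 hγ1 hdiag hlow ts B hmono hbdd hroots k hr i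
  have htseq : ∀ k, ts k + (ts (k + N) - ts k) = ts (k + N) := by
    intro k
    have := tsm.monotone (Nat.le_add_right k N)
    omega
  have block : ∀ k, M (ts (k + N)) ≤ M (ts k) - δ * (M (ts k) - m (ts k)) ∧
      m (ts k) + δ * (M (ts k) - m (ts k)) ≤ m (ts (k + N)) := by
    intro k
    set a := ts k
    set n := ts (k + N) - ts k with hn
    have hts : ts (k + N) = a + n := (htseq k).symm
    obtain ⟨rmin, hrmin, hrmineq⟩ := Finset.exists_mem_eq_inf' hRne (y a)
    obtain ⟨rmax, hrmax, hrmaxeq⟩ := Finset.exists_mem_eq_sup' hRne (y a)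
    constructor
    · rw [hts]
      apply Finset.sup'_le
      intro i hi
      have hi' := (hmemR i).1 hi
      rw [hyblock a n i hi']
      exact conv_pull (hprod1 a n i) (hprodrow a n i) rmin hδ0.le
        (hreach k rmin ((hmemR rmin).1 hrmin) i)
        (fun j hj => hyM a j (hprodsupp a n i j hi' hj))
        (le_of_eq hrmineq.symm) (hmM a)
    · rw [hts]
      apply Finset.le_inf'
      intro i hi
      have hi' := (hmemR i).1 hi
      rw [hyblock a n i hi']
      have h1 : ∑ j, prodA P a n i j * (-(y a j))
          ≤ (-(m a)) - δ * ((-(m a)) - (-(M a))) :=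
        conv_pull (hprod1 a n i) (hprodrow a n i) rmax hδ0.le
          (hreach k rmax ((hmemR rmax).1 hrmax) i)
          (fun j hj => neg_le_neg (hmy a j (hprodsupp a n i j hi' hj)))
          (le_of_eq (by rw [show M a = y a rmax from hrmaxeq])) (by linarith [hmM a])
      have h2 : ∑ j, prodA P a n i j * (-(y a j)) = -∑ j, prodA P a n i j * y a j := by
        simp [mul_neg]
      rw [h2] at h1
      linarith
  -- geometric decay of d along the subsequence ts (k * N)
  set c : ℝ := max (1 - 2 * δ) 0 with hcdef
  have hc0 : 0 ≤ c := le_max_right _ _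
  have hc1 : c < 1 := max_lt (by linarith) one_pos
  set u : ℕ → ℝ := fun k => M (ts (k * N)) - m (ts (k * N)) with hudef
  have hu0 : ∀ k, 0 ≤ u k := fun k => by
    have := hmM (ts (k * N)); simp [hudef]; linarith
  have hustep : ∀ k, u (k + 1) ≤ c * u k := by
    intro k
    have hb := block (k * N)
    have he : k * N + N = (k + 1) * N := by ring
    have h1 : M (ts ((k + 1) * N)) - m (ts ((k + 1) * N))
        ≤ (1 - 2 * δ) * (M (ts (k * N)) - m (ts (k * N))) := by
      rw [← he]
      have := hb.1
      have := hb.2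
      ring_nf
      nlinarith [hb.1, hb.2]
    calc u (k + 1) ≤ (1 - 2 * δ) * u k := h1
    _ ≤ c * u k := mul_le_mul_of_nonneg_right (le_max_left _ _) (hu0 k)
  have hugeo : ∀ k, u k ≤ c ^ k * u 0 := by
    intro k; induction k with
    | zero => simp
    | succ k ih =>
      calc u (k + 1) ≤ c * u k := hustep k
      _ ≤ c * (c ^ k * u 0) := mul_le_mul_of_nonneg_left ih hc0
      _ = c ^ (k + 1) * u 0 := by ring
  have hutend : Tendsto u atTop (nhds 0) := by
    apply tendsto_of_tendsto_of_tendsto_of_le_of_le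
      (tendsto_const_nhds : Tendsto (fun _ : ℕ => (0:ℝ)) atTop (nhds 0))
      ?_ hu0 hugeo
    have := (tendsto_pow_atTop_nhds_zero_of_lt_one hc0 hc1).mul_const (u 0)
    simpa using this
  -- d(t) → 0
  have hdanti : ∀ s t, s ≤ t → M t - m t ≤ M s - m s := by
    intro s t h
    have := hmanti s t h
    have := hmmono s t h
    linarith
  have hdtend : Tendsto (fun t => M t - m t) atTop (nhds 0) := by
    rw [Metric.tendsto_atTop]
    intro ε hε
    obtain ⟨k0, hk0⟩ := Metric.tendsto_atTop.1 hutend ε hε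
    refine ⟨ts (k0 * N), fun t ht => ?_⟩
    have h1 : M t - m t ≤ u k0 := hdanti (ts (k0 * N)) t ht
    have h3 : 0 ≤ M t - m t := by linarith [hmM t]
    have h4 : 0 ≤ u k0 := hu0 k0
    have h2 : u k0 < ε := by
      have h5 := hk0 k0 le_rfl
      rw [Real.dist_eq, sub_zero, abs_of_nonneg h4] at h5
      exact h5
    show dist (M t - m t) 0 < ε
    rw [Real.dist_eq, sub_zero, abs_of_nonneg h3]
    linarith
  -- m converges
  have hmbdd : BddAbove (Set.range m) := by
    refine ⟨M 0, ?_⟩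
    rintro z ⟨t, rfl⟩
    exact le_trans (hmM t) (hmanti 0 t (Nat.zero_le t))
  set C : ℝ := ⨆ t, m t with hCdef
  have hmtend : Tendsto m atTop (nhds C) :=
    tendsto_atTop_ciSup (fun s t h => hmmono s t h) hmbdd
  have hMtend : Tendsto M atTop (nhds C) := by
    have := hmtend.add hdtend
    simp only [add_zero] at this
    convert this using 2 with t
    ring
  have hytend : ∀ i, Root i → Tendsto (fun t => y t i) atTop (nhds C) := by
    intro i hi
    exact tendsto_of_tendsto_of_tendsto_of_le_of_le hmtend hMtend
      (fun t => hmy t i hi) (fun t => hyM t i hi)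
  -- K converges and its limit is at most |C|
  have hKbdd : BddBelow (Set.range K) := ⟨0, by rintro z ⟨t, rfl⟩; exact hK0 t⟩
  set Kinf : ℝ := ⨅ t, K t with hKinfdef
  have hKtend : Tendsto K atTop (nhds Kinf) :=
    tendsto_atTop_ciInf (fun s t h => hKanti s t h) hKbdd
  have hxrT : Tendsto (fun t => |x t rT|) atTop (nhds |C|) := by
    have := (hytend rT hrT).abs
    simp only [habsyx] at this
    exact this
  have htail : ∀ k, K (ts ((k + 1) * N))
      ≤ K (ts (k * N)) - δ * (K (ts (k * N)) - |x (ts (k * N)) rT|) := by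
    intro k
    set a := ts (k * N)
    set n := ts (k * N + N) - ts (k * N) with hn
    have hts : ts (k * N + N) = a + n := (htseq (k * N)).symm
    have he : k * N + N = (k + 1) * N := by ring
    rw [← he, hts]
    apply Finset.sup'_le
    intro i _
    exact le_trans (hxblock a n i)
      (conv_pull (hprod1 a n i) (hprodrow a n i) rT hδ0.le
        (hreach (k * N) rT hrT i)
        (fun j _ => hxK a j) le_rfl (hxK a rT))
  have hsub1 : Tendsto (fun k => ts (k * N)) atTop atTop := by
    apply StrictMono.tendsto_atTop
    intro a b hab
    exact tsm (by exact Nat.mul_lt_mul_of_lt_of_le hab le_rfl hNpos)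
  have hsub2 : Tendsto (fun k => ts ((k + 1) * N)) atTop atTop := by
    apply StrictMono.tendsto_atTop
    intro a b hab
    exact tsm (by exact Nat.mul_lt_mul_of_lt_of_le (by omega) le_rfl hNpos)
  have hA1 : Tendsto (fun k => K (ts ((k + 1) * N))) atTop (nhds Kinf) :=
    hKtend.comp hsub2
  have hA2 : Tendsto (fun k => K (ts (k * N)) - δ * (K (ts (k * N)) - |x (ts (k * N)) rT|))
      atTop (nhds (Kinf - δ * (Kinf - |C|))) := by
    have h1 : Tendsto (fun k => K (ts (k * N))) atTop (nhds Kinf) := hKtend.comp hsub1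
    have h2 : Tendsto (fun k => |x (ts (k * N)) rT|) atTop (nhds |C|) := hxrT.comp hsub1
    exact h1.sub ((h1.sub h2).const_mul δ)
  have hKC : Kinf ≤ |C| := by
    have := le_of_tendsto_of_tendsto' hA1 hA2 htail
    nlinarith
  refine ⟨C, hytend, ?_⟩
  intro i
  have h1 : Filter.limsup (fun t => |x t i|) atTop ≤ Filter.limsup K atTop := by
    exact Filter.limsup_le_limsup (Filter.Eventually.of_forall (fun t => hxK t i))
      (Filter.isCoboundedUnder_le_of_le atTop (fun t => abs_nonneg _))
      (hKtend.isBoundedUnder_le)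
  rw [hKtend.limsup_eq] at h1
  exact le_trans h1 hKC


lemma y_const_one (hdiag : ∀ t i, 0 < P t i i)
    (habs : ∀ t i, ∑ j, |P t i j| = 1)
    (hbal : ∀ t i j, Root i → Root j → i ≠ j → P t i j ≠ 0 →
      (f i = f j ↔ 0 < P t i j)) :
    ∀ t i, Root i → yv P f (fun j => Dv f j) t i = 1 := by
  intro t
  induction t with
  | zero => intro i _; exact Dv_sq f i
  | succ t ih =>
    intro i hi
    rw [y_step P hRoot f hdiag hbal _ t hi]
    have h1 : ∀ j, |P t i j| * yv P f (fun j => Dv f j) t j = |P t i j| := by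
      intro j
      by_cases h : |P t i j| = 0
      · simp [h]
      · have hj : Root j := root_closure P hRoot t hi (fun h0 => h (by simp [h0]))
        rw [ih j hj, mul_one]
    rw [Finset.sum_congr rfl (fun j _ => h1 j)]
    exact habs t i

omit hRoot in
lemma traj_add (x0 x1 : Fin N → ℝ) :
    ∀ t, traj P (x0 + x1) t = traj P x0 t + traj P x1 t := by
  intro t; induction t with
  | zero => rfl
  | succ t ih =>
    show P t *ᵥ traj P (x0 + x1) t = _
    rw [ih, Matrix.mulVec_add]
    rfl

omit hRoot in
lemma traj_smul (a : ℝ) (x0 : Fin N → ℝ) :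
    ∀ t, traj P (a • x0) t = a • traj P x0 t := by
  intro t; induction t with
  | zero => rfl
  | succ t ih =>
    show P t *ᵥ traj P (a • x0) t = _
    rw [ih, Matrix.mulVec_smul]
    rfl

end Aux

/-- Agents in the root set `Root` converge to `C` / `-C` according to the
bipartition `f`, and every other agent satisfies `limsup |x_i(t)| ≤ |C|`. -/
def PolarizesWithTail {N : ℕ} (P : ℕ → Matrix (Fin N) (Fin N) ℝ)
    (Root : Fin N → Prop) (f : Fin N → Bool) (x0 : Fin N → ℝ) (C : ℝ) : Prop :=
  (∀ i, Root i → Tendsto (fun t => traj P x0 t i) atTop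
      (nhds (if f i then C else -C))) ∧
  (∀ i, ¬ Root i → Filter.limsup (fun t => |traj P x0 t i|) atTop ≤ |C|)

theorem stmt14 {N : ℕ} (P : ℕ → Matrix (Fin N) (Fin N) ℝ) (γ : ℝ)
    (hγ : 0 < γ ∧ γ < 1)
    (habs : ∀ t i, ∑ j, |P t i j| = 1) (hdiag : ∀ t i, 0 < P t i i)
    (hlow : ∀ t i j, P t i j ≠ 0 → γ ≤ |P t i j|)
    -- V^s: the root vertex set of the union of all the graphs over [0,∞)
    (Root : Fin N → Prop)
    (hRoot : ∀ v, Root v ↔ ∀ w, Relation.ReflTransGen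
      (fun j i : Fin N => i ≠ j ∧ ∃ t, P t i j ≠ 0) v w)
    -- (i) bipartition of V^s into two nonempty subsets, valid for every t
    (f : Fin N → Bool)
    (hfne : (∃ i, Root i ∧ f i = true) ∧ (∃ i, Root i ∧ f i = false))
    (hbal : ∀ t i j, Root i → Root j → i ≠ j → P t i j ≠ 0 →
      (f i = f j ↔ 0 < P t i j))
    -- (ii) uniformly bounded intervals over which the union graph contains a
    -- spanning tree whose root vertex set is exactly V^s
    (ts : ℕ → ℕ) (B : ℕ) (hts0 : ts 0 = 0) (hmono : ∀ k, ts k < ts (k + 1))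
    (hbdd : ∀ k, ts (k + 1) - ts k ≤ B)
    (hroots : ∀ k v, (∀ w, Relation.ReflTransGen
        (fun j i : Fin N => ∃ s, ts k ≤ s ∧ s < ts (k + 1) ∧ i ≠ j ∧ P s i j ≠ 0) v w)
      ↔ Root v) :
    (∀ x0 : Fin N → ℝ, ∃ C : ℝ, PolarizesWithTail P Root f x0 C) ∧
    (∀ᵐ x0 : Fin N → ℝ ∂volume, ∃ C : ℝ, C ≠ 0 ∧ PolarizesWithTail P Root f x0 C) := by
  classical
  obtain ⟨hγ0, hγ1⟩ := hγ
  obtain ⟨⟨rT, hrT, hfT⟩, _⟩ := hfne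
  have key : ∀ x0 : Fin N → ℝ, ∃ C : ℝ,
      (∀ i, Root i → Tendsto (fun t => yv P f x0 t i) atTop (nhds C)) ∧
      (∀ i, Filter.limsup (fun t => |traj P x0 t i|) atTop ≤ |C|) :=
    fun x0 => key_all P hRoot f hγ0 hγ1 habs hdiag hlow hbal hrT ts B hmono hbdd hroots x0
  have poltail : ∀ x0 C,
      (∀ i, Root i → Tendsto (fun t => yv P f x0 t i) atTop (nhds C)) →
      (∀ i, Filter.limsup (fun t => |traj P x0 t i|) atTop ≤ |C|) →
      PolarizesWithTail P Root f x0 C := by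
    intro x0 C h1 h2
    constructor
    · intro i hi
      have h3 := (h1 i hi).const_mul (Dv f i)
      have h4 : ∀ t, Dv f i * yv P f x0 t i = traj P x0 t i := by
        intro t
        show Dv f i * (Dv f i * traj P x0 t i) = _
        rw [← mul_assoc, Dv_sq, one_mul]
      simp only [h4] at h3
      convert h3 using 2
      unfold Dv
      split <;> ring
    · intro i _
      exact h2 i
  refine ⟨fun x0 => ?_, ?_⟩
  · obtain ⟨C, h1, h2⟩ := key x0
    exact ⟨C, poltail x0 C h1 h2⟩
  set Cfun : (Fin N → ℝ) → ℝ := fun x0 => (key x0).choose with hCfun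
  have hCy : ∀ x0, Tendsto (fun t => yv P f x0 t rT) atTop (nhds (Cfun x0)) :=
    fun x0 => (key x0).choose_spec.1 rT hrT
  have hyx : ∀ x0 t, yv P f x0 t rT = traj P x0 t rT := by
    intro x0 t
    show Dv f rT * _ = _
    unfold Dv
    rw [hfT, if_pos rfl, one_mul]
  have hCx : ∀ x0, Tendsto (fun t => traj P x0 t rT) atTop (nhds (Cfun x0)) := by
    intro x0
    have := hCy x0
    simp only [hyx] at this
    exact this
  have hadd : ∀ x0 x1, Cfun (x0 + x1) = Cfun x0 + Cfun x1 := by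
    intro x0 x1
    have h1 := (hCx x0).add (hCx x1)
    have h2 := hCx (x0 + x1)
    have h3 : ∀ t, traj P (x0 + x1) t rT = traj P x0 t rT + traj P x1 t rT := by
      intro t
      rw [traj_add P x0 x1 t]
      rfl
    simp only [h3] at h2
    exact tendsto_nhds_unique h2 h1
  have hsmul : ∀ (a : ℝ) x0, Cfun (a • x0) = a * Cfun x0 := by
    intro a x0
    have h1 := (hCx x0).const_mul a
    have h2 := hCx (a • x0)
    have h3 : ∀ t, traj P (a • x0) t rT = a * traj P x0 t rT := by
      intro t
      rw [traj_smul P a x0 t]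
      rfl
    simp only [h3] at h2
    exact tendsto_nhds_unique h2 h1
  set L : (Fin N → ℝ) →ₗ[ℝ] ℝ :=
    { toFun := Cfun
      map_add' := hadd
      map_smul' := by intro a x; simpa using hsmul a x } with hL
  have hLe : L (fun j => Dv f j) = 1 := by
    have h2 : ∀ t, traj P (fun j => Dv f j) t rT = 1 := by
      intro t
      rw [← hyx _ t]
      exact y_const_one P hRoot f hdiag habs hbal t rT hrT
    have h1 : Tendsto (fun t => traj P (fun j => Dv f j) t rT) atTop (nhds 1) := by
      simp only [h2]
      exact tendsto_const_nhds
    exact tendsto_nhds_unique (hCx _) h1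
  have hker : LinearMap.ker L ≠ ⊤ := by
    intro h
    have := LinearMap.ker_eq_top.1 h
    rw [this] at hLe
    simp at hLe
  have hmeas : volume (LinearMap.ker L : Set (Fin N → ℝ)) = 0 :=
    MeasureTheory.Measure.addHaar_submodule volume _ hker
  have hae : ∀ᵐ x0 : Fin N → ℝ ∂volume, Cfun x0 ≠ 0 := by
    rw [ae_iff]
    have hsets : {x0 : Fin N → ℝ | ¬ Cfun x0 ≠ 0} = (LinearMap.ker L : Set (Fin N → ℝ)) := by
      ext x0
      simp [LinearMap.mem_ker, hL]
    rw [hsets]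
    exact hmeas
  filter_upwards [hae] with x0 hx0
  exact ⟨Cfun x0, hx0,
    poltail x0 (Cfun x0) (key x0).choose_spec.1 (key x0).choose_spec.2⟩
end

section
/- Let (P(t))_{t≥0} satisfy: positive diagonals, |P(t)| row-stochastic, nonzero entries bounded below in modulus by γ > 0. Assume there is an infinite sequence of uniformly bounded intervals [t_i,t_{i+1}) such that over each interval the union of the graphs contains a directed spanning tree, and for the root vertex set of the union graph over that interval there is no bipartition into two subsets (one possibly empty) making all between-subset edges negative and all within-subset edges positive in every graph G(P(s)), s ∈ [t_i,t_{i+1}). Then every solution of x(t+1) = P(t)x(t) converges to zero. -/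
open Matrix Filter

/-- Reachability in the union of the graphs `G(P(s))` for `s ∈ [a, b)`:
edge `j → i` whenever `p_ij(s) ≠ 0` for some `s` in the interval. -/
def IntervalReach {N : ℕ} (P : ℕ → Matrix (Fin N) (Fin N) ℝ) (a b : ℕ) :
    Fin N → Fin N → Prop :=
  Relation.ReflTransGen (fun j i => ∃ s, a ≤ s ∧ s < b ∧ i ≠ j ∧ P s i j ≠ 0)

open Relation

/-! ### Combinatorial part: compositions of rooted graphs -/

section Comb

variable {V : Type*} [Fintype V] [DecidableEq V]

open Classical in
/-- Ancestor sets: `AncSet H m w j` is the set of vertices having a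
time-respecting path (with waiting allowed) to `w` through graphs
`H (m-j), …, H (m-1)` (applied in that order). -/
noncomputable def AncSet (H : ℕ → V → V → Prop) (m : ℕ) (w : V) : ℕ → Finset V
  | 0 => {w}
  | j+1 => Finset.univ.filter fun v =>
      ∃ u ∈ AncSet H m w j, u = v ∨ H (m - 1 - j) v u

lemma mem_ancSet_succ {H : ℕ → V → V → Prop} {m : ℕ} {w v : V} {j : ℕ} :
    v ∈ AncSet H m w (j+1) ↔ ∃ u ∈ AncSet H m w j, u = v ∨ H (m - 1 - j) v u := by
  simp [AncSet]

lemma ancSet_mono (H : ℕ → V → V → Prop) (m : ℕ) (w : V) (j : ℕ) :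
    AncSet H m w j ⊆ AncSet H m w (j+1) := by
  intro v hv
  exact mem_ancSet_succ.mpr ⟨v, hv, Or.inl rfl⟩

lemma ancSet_mono' (H : ℕ → V → V → Prop) (m : ℕ) (w : V) {j j' : ℕ} (h : j ≤ j') :
    AncSet H m w j ⊆ AncSet H m w j' := by
  induction j' with
  | zero => simpa [Nat.le_zero.mp h] using Finset.Subset.refl _
  | succ n ih =>
    rcases Nat.lt_or_ge j (n+1) with h' | h'
    · exact (ih (Nat.lt_succ_iff.mp h')).trans (ancSet_mono H m w n)
    · have : j = n + 1 := le_antisymm h h'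
      simp [this]

lemma mem_ancSet_self (H : ℕ → V → V → Prop) (m : ℕ) (w : V) (j : ℕ) :
    w ∈ AncSet H m w j := by
  have : w ∈ AncSet H m w 0 := by simp [AncSet]
  exact ancSet_mono' H m w (Nat.zero_le j) this

lemma ancSet_flip {H : ℕ → V → V → Prop} (g : V → V)
    (hH : ∀ k v u, H k v u → H k (g v) (g u)) {m : ℕ} {w : V} :
    ∀ {j : ℕ} {v : V}, v ∈ AncSet H m w j → g v ∈ AncSet H m (g w) j := by
  intro j
  induction j with
  | zero =>
    intro v hv
    have : v = w := by simpa [AncSet] using hv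
    subst this
    simp [AncSet]
  | succ j ih =>
    intro v hv
    obtain ⟨u, hu, h⟩ := mem_ancSet_succ.mp hv
    exact mem_ancSet_succ.mpr
      ⟨g u, ih hu, h.elim (fun e => Or.inl (congrArg g e)) (fun e => Or.inr (hH _ _ _ e))⟩

omit [Fintype V] [DecidableEq V] in
/-- Crossing lemma: a path from outside a set to inside must cross the boundary. -/
lemma crossing {R : V → V → Prop} {S : Finset V} {r w : V}
    (hrw : ReflTransGen R r w) (hw : w ∈ S) (hr : r ∉ S) :
    ∃ p q, R p q ∧ p ∉ S ∧ q ∈ S := by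
  induction hrw using ReflTransGen.head_induction_on with
  | refl => exact absurd hw hr
  | head hstep _ ih =>
    rename_i a c _
    by_cases hc : c ∈ S
    · exact ⟨a, c, hstep, hr, hc⟩
    · exact ih hc

lemma ancSet_growth (H : ℕ → V → V → Prop) (m : ℕ) (w : V) (j : ℕ) {r : V}
    (hroot : ∀ u, ReflTransGen (H (m - 1 - j)) r u)
    (hcard : ¬ (AncSet H m w j).card < (AncSet H m w (j+1)).card) :
    r ∈ AncSet H m w j := by
  by_contra hr
  obtain ⟨p, q, hpq, hp, hq⟩ := crossing (hroot w) (mem_ancSet_self H m w j) hr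
  have hpmem : p ∈ AncSet H m w (j+1) := mem_ancSet_succ.mpr ⟨q, hq, Or.inr hpq⟩
  exact hcard (Finset.card_lt_card ⟨ancSet_mono H m w j, fun hsub => hp (hsub hpmem)⟩)

/-- The key combinatorial lemma: a composition of `(card V)^2` rooted graphs
(with waiting/self-loops) is strongly rooted. -/
lemma strong_root (H : ℕ → V → V → Prop)
    (hroot : ∀ k, ∃ r : V, ∀ u, ReflTransGen (H k) r u) (hV : 0 < Fintype.card V) :
    ∃ ρ : V, ∀ w : V, ρ ∈ AncSet H (Fintype.card V * Fintype.card V) w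
      (Fintype.card V * Fintype.card V) := by
  by_contra hcon
  push_neg at hcon
  set n := Fintype.card V with hn
  set m := n * n with hm
  have key : ∃ j, j < m ∧ ∀ w : V, ¬ (AncSet H m w j).card < (AncSet H m w (j+1)).card := by
    by_contra hk
    push_neg at hk
    have hstep : ∀ j, j < m → (∑ w : V, (AncSet H m w j).card) + 1 ≤
        ∑ w : V, (AncSet H m w (j+1)).card := by
      intro j hj
      obtain ⟨w0, hw0⟩ := hk j hj
      calc (∑ w : V, (AncSet H m w j).card) + 1
          = ∑ w : V, ((AncSet H m w j).card + if w = w0 then 1 else 0) := by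
            rw [Finset.sum_add_distrib]; simp
        _ ≤ ∑ w : V, (AncSet H m w (j+1)).card := by
            apply Finset.sum_le_sum
            intro w _
            have h1 : (AncSet H m w j).card ≤ (AncSet H m w (j+1)).card :=
              Finset.card_le_card (ancSet_mono H m w j)
            by_cases hw : w = w0
            · subst hw; rw [if_pos rfl]; omega
            · simp only [if_neg hw, add_zero]; exact h1
    have htot : ∀ j, j ≤ m → (∑ w : V, (AncSet H m w 0).card) + j ≤
        ∑ w : V, (AncSet H m w j).card := by
      intro j
      induction j with
      | zero => intro _; simp
      | succ i ih =>
        intro hj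
        have h1 := hstep i (by omega)
        have h2 := ih (by omega)
        omega
    have hub : (∑ w : V, (AncSet H m w m).card) ≤ n * n := by
      calc ∑ w : V, (AncSet H m w m).card ≤ ∑ _w : V, n :=
            Finset.sum_le_sum fun w _ => by
              simpa [hn] using Finset.card_le_univ (AncSet H m w m)
        _ = n * n := by rw [Finset.sum_const, smul_eq_mul, Finset.card_univ, ← hn]
    have hlb : n ≤ ∑ w : V, (AncSet H m w 0).card := by
      calc n = ∑ _w : V, 1 := by simp [hn]
        _ ≤ _ := Finset.sum_le_sum fun w _ =>
              Finset.card_pos.mpr ⟨w, mem_ancSet_self H m w 0⟩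
    have := htot m le_rfl
    omega
  obtain ⟨j, hj, hnog⟩ := key
  obtain ⟨r, hr⟩ := hroot (m - 1 - j)
  have hall : ∀ w, r ∈ AncSet H m w m := fun w =>
    ancSet_mono' H m w (le_of_lt hj) (ancSet_growth H m w j hr (hnog w))
  obtain ⟨w, hw⟩ := hcon r
  exact hw (hall w)

end Comb

/-! ### The lifted signed graph -/

section Lift

variable {N : ℕ} (P : ℕ → Matrix (Fin N) (Fin N) ℝ)

/-- Edge of the lifted (2N-dimensional) signed graph at time `t`. -/
def EdgeAt (t : ℕ) (v u : Fin N × Bool) : Prop :=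
  u.1 ≠ v.1 ∧ P t u.1 v.1 ≠ 0 ∧ (u.2 = v.2 ↔ 0 < P t u.1 v.1)

/-- Edge of the union of lifted graphs over `[a, b)`. -/
def LiftEdge (a b : ℕ) (v u : Fin N × Bool) : Prop :=
  ∃ s, a ≤ s ∧ s < b ∧ EdgeAt P s v u

/-- The mirror involution of the lifted vertex set. -/
def negV {N : ℕ} (u : Fin N × Bool) : Fin N × Bool := (u.1, !u.2)

lemma negV_negV {N : ℕ} (u : Fin N × Bool) : negV (negV u) = u := by
  cases u; simp [negV]

lemma edgeAt_flip {t : ℕ} {v u : Fin N × Bool} (h : EdgeAt P t v u) :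
    EdgeAt P t (negV v) (negV u) := by
  obtain ⟨h1, h2, h3⟩ := h
  refine ⟨h1, h2, ?_⟩
  simp only [negV]
  cases hu : u.2 <;> cases hv : v.2 <;> simp_all

lemma liftEdge_flip {a b : ℕ} {v u : Fin N × Bool} (h : LiftEdge P a b v u) :
    LiftEdge P a b (negV v) (negV u) := by
  obtain ⟨s, hs1, hs2, he⟩ := h
  exact ⟨s, hs1, hs2, edgeAt_flip P he⟩

lemma liftReach_flip {a b : ℕ} {v u : Fin N × Bool}
    (h : ReflTransGen (LiftEdge P a b) v u) :
    ReflTransGen (LiftEdge P a b) (negV v) (negV u) := by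
  induction h with
  | refl => exact ReflTransGen.refl
  | tail _ hstep ih => exact ih.tail (liftEdge_flip P hstep)

lemma liftReach_exists {a b : ℕ} {i j : Fin N} (h : IntervalReach P a b i j) (σ : Bool) :
    ∃ τ, ReflTransGen (LiftEdge P a b) (i, σ) (j, τ) := by
  induction h with
  | refl => exact ⟨σ, ReflTransGen.refl⟩
  | tail _ hstep ih =>
    rename_i c d hcd
    obtain ⟨s, hs1, hs2, hne, hP⟩ := hstep
    obtain ⟨τ, hτ⟩ := ih
    refine ⟨if 0 < P s d c then τ else !τ, hτ.tail ⟨s, hs1, hs2, hne, hP, ?_⟩⟩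
    by_cases hpos : 0 < P s d c <;> simp [hpos]

/-- The lifted union graph over a "good" interval is rooted. -/
lemma lift_rooted {a b : ℕ}
    (htree : ∃ r : Fin N, ∀ w, IntervalReach P a b r w)
    (hnb : ¬ ∃ f : Fin N → Bool, ∀ s, a ≤ s → s < b →
      ∀ i j : Fin N, (∀ w, IntervalReach P a b i w) → (∀ w, IntervalReach P a b j w) →
        i ≠ j → P s i j ≠ 0 → (f i = f j ↔ 0 < P s i j)) :
    ∃ ρ : Fin N × Bool, ∀ u, ReflTransGen (LiftEdge P a b) ρ u := by
  classical
  obtain ⟨r, hr⟩ := htree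
  have hflip : ReflTransGen (LiftEdge P a b) (r, true) (r, false) := by
    by_contra hcf
    apply hnb
    refine ⟨fun i => decide (ReflTransGen (LiftEdge P a b) (r, true) (i, true)), ?_⟩
    have huniq : ∀ i : Fin N, (∀ w, IntervalReach P a b i w) →
        ∀ τ τ' : Bool, ReflTransGen (LiftEdge P a b) (r, true) (i, τ) →
        ReflTransGen (LiftEdge P a b) (r, true) (i, τ') → τ = τ' := by
      intro i hi τ τ' h1 h2
      by_contra hne
      obtain ⟨δ, hδ⟩ := liftReach_exists P (hi r) τ
      have h3 : ReflTransGen (LiftEdge P a b) (i, !τ) (r, !δ) := by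
        have := liftReach_flip P hδ
        simpa [negV] using this
      have hτ' : τ' = !τ := by revert hne; cases τ <;> cases τ' <;> simp
      subst hτ'
      have hreach1 : ReflTransGen (LiftEdge P a b) (r, true) (r, δ) := h1.trans hδ
      have hreach2 : ReflTransGen (LiftEdge P a b) (r, true) (r, !δ) := h2.trans h3
      cases δ
      · exact hcf hreach1
      · exact hcf (by simpa using hreach2)
    have hval : ∀ i : Fin N, (∀ w, IntervalReach P a b i w) → ∀ τ : Bool,
        ReflTransGen (LiftEdge P a b) (r, true) (i, τ) →
        decide (ReflTransGen (LiftEdge P a b) (r, true) (i, true)) = τ := by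
      intro i hi τ hτ
      cases τ
      · refine decide_eq_false fun hh => ?_
        have := huniq i hi true false hh hτ
        simp at this
      · exact decide_eq_true hτ
    intro s hs1 hs2 i j hi hj hij hP
    obtain ⟨τi, hτi⟩ := liftReach_exists P (hr i) true
    obtain ⟨τj, hτj⟩ := liftReach_exists P (hr j) true
    have hstep : LiftEdge P a b (j, τj) (i, if 0 < P s i j then τj else !τj) := by
      refine ⟨s, hs1, hs2, hij, hP, ?_⟩
      by_cases hpos : 0 < P s i j <;> simp [hpos]
    have hreach : ReflTransGen (LiftEdge P a b) (r, true)
        (i, if 0 < P s i j then τj else !τj) := hτj.tail hstep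
    have hfi := hval i hi _ hreach
    have hfj := hval j hj _ hτj
    show decide (ReflTransGen (LiftEdge P a b) (r, true) (i, true)) =
        decide (ReflTransGen (LiftEdge P a b) (r, true) (j, true)) ↔ 0 < P s i j
    rw [hfi, hfj]
    by_cases hpos : 0 < P s i j <;> simp [hpos]
  refine ⟨(r, true), ?_⟩
  rintro ⟨w, σ⟩
  obtain ⟨τ, hτ⟩ := liftReach_exists P (hr w) true
  by_cases hστ : τ = σ
  · subst hστ; exact hτ
  · have hσ : σ = !τ := by revert hστ; cases τ <;> cases σ <;> simp
    subst hσ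
    have h2 : ReflTransGen (LiftEdge P a b) (r, false) (w, !τ) := by
      have := liftReach_flip P hτ
      simpa [negV] using this
    exact hflip.trans h2

end Lift

/-! ### Analytic part -/

def zee {N : ℕ} (x : Fin N → ℝ) (u : Fin N × Bool) : ℝ := if u.2 then x u.1 else -(x u.1)

noncomputable def Mof {N : ℕ} (hN : 0 < N) (x : Fin N → ℝ) : ℝ :=
  Finset.univ.sup' ⟨⟨0, hN⟩, Finset.mem_univ _⟩ fun i => |x i|

section Analytic

variable {N : ℕ}

lemma abs_le_Mof (hN : 0 < N) (x : Fin N → ℝ) (i : Fin N) : |x i| ≤ Mof hN x := by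
  unfold Mof; exact Finset.le_sup' (fun i => |x i|) (Finset.mem_univ i)

lemma Mof_le (hN : 0 < N) (x : Fin N → ℝ) {c : ℝ} (h : ∀ i, |x i| ≤ c) :
    Mof hN x ≤ c := by
  unfold Mof; exact Finset.sup'_le _ _ fun i _ => h i

lemma Mof_nonneg (hN : 0 < N) (x : Fin N → ℝ) : 0 ≤ Mof hN x :=
  le_trans (abs_nonneg _) (abs_le_Mof hN x ⟨0, hN⟩)

lemma zee_le_Mof (hN : 0 < N) (x : Fin N → ℝ) (u : Fin N × Bool) :
    zee x u ≤ Mof hN x := by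
  have h := abs_le_Mof hN x u.1
  cases hu : u.2 <;> simp [zee, hu] <;> cases abs_le.mp h <;> linarith [abs_le.mp h]

lemma zee_negV (x : Fin N → ℝ) (u : Fin N × Bool) : zee x (negV u) = - zee x u := by
  cases hu : u.2 <;> simp [zee, negV, hu]

variable (P : ℕ → Matrix (Fin N) (Fin N) ℝ) (γ : ℝ)

lemma traj_succ (x0 : Fin N → ℝ) (t : ℕ) (i : Fin N) :
    traj P x0 (t+1) i = ∑ j, P t i j * traj P x0 t j := by
  simp [traj, Matrix.mulVec, dotProduct]

lemma gamma_le_one (hN : 0 < N) (habs : ∀ t i, ∑ j, |P t i j| = 1)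
    (hdiag : ∀ t i, 0 < P t i i) (hlow : ∀ t i j, P t i j ≠ 0 → γ ≤ |P t i j|) :
    γ ≤ 1 := by
  set i0 : Fin N := ⟨0, hN⟩
  have h1 : |P 0 i0 i0| ≤ ∑ j, |P 0 i0 j| :=
    Finset.single_le_sum (f := fun j => |P 0 i0 j|) (fun j _ => abs_nonneg _)
      (Finset.mem_univ i0)
  have h2 := hlow 0 i0 i0 (hdiag 0 i0).ne'
  rw [habs 0 i0] at h1
  linarith

lemma step_bound (hγ : 0 < γ) (habs : ∀ t i, ∑ j, |P t i j| = 1)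
    (hdiag : ∀ t i, 0 < P t i i) (hlow : ∀ t i j, P t i j ≠ 0 → γ ≤ |P t i j|)
    (hN : 0 < N) (x0 : Fin N → ℝ) (t : ℕ) (u v : Fin N × Bool)
    (h : u = v ∨ EdgeAt P t v u) :
    zee (traj P x0 (t+1)) u ≤
      (1 - γ) * Mof hN (traj P x0 t) + γ * zee (traj P x0 t) v := by
  obtain ⟨i, τ⟩ := u
  obtain ⟨j₀, σ⟩ := v
  set x : Fin N → ℝ := traj P x0 t with hx
  set M : ℝ := Mof hN x with hM
  have hkey : P t i j₀ ≠ 0 ∧ (τ = σ ↔ 0 < P t i j₀) := by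
    rcases h with heq | ⟨h1, h2, h3⟩
    · obtain ⟨rfl, rfl⟩ := Prod.mk.injEq .. ▸ (Prod.mk.inj heq)
      exact ⟨(hdiag t i).ne', by simp [hdiag t i]⟩
    · exact ⟨h2, h3⟩
  set ε : ℝ := if τ then 1 else -1 with hε
  have habs_e : |ε| = 1 := by cases τ <;> simp [hε]
  have hx' : zee (traj P x0 (t+1)) (i, τ) = ∑ j, ε * (P t i j * x j) := by
    rw [← Finset.mul_sum]
    cases τ <;> simp [zee, hε, traj_succ P x0 t i, hx]
  have hterm : ∀ j, ε * (P t i j * x j) ≤ |P t i j| * M := by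
    intro j
    calc ε * (P t i j * x j) ≤ |ε * (P t i j * x j)| := le_abs_self _
      _ = |P t i j| * |x j| := by rw [abs_mul, abs_mul, habs_e, one_mul]
      _ ≤ |P t i j| * M := mul_le_mul_of_nonneg_left (abs_le_Mof hN x j) (abs_nonneg _)
  have hkey0 : ε * (P t i j₀ * x j₀) = |P t i j₀| * zee x (j₀, σ) := by
    by_cases hpos : 0 < P t i j₀
    · have hτσ : τ = σ := hkey.2.mpr hpos
      subst hτσ
      rw [abs_of_pos hpos]
      cases τ <;> simp [zee, hε] <;> try ring
    · have hneg : P t i j₀ < 0 := lt_of_le_of_ne (not_lt.mp hpos) hkey.1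
      have hτσ : τ = !σ := by
        have h2 : ¬ τ = σ := fun hh => hpos (hkey.2.mp hh)
        revert h2; cases τ <;> cases σ <;> simp
      subst hτσ
      rw [abs_of_neg hneg]
      cases σ <;> simp [zee, hε] <;> try ring
  have hq : γ ≤ |P t i j₀| := hlow t i j₀ hkey.1
  have hzM : zee x (j₀, σ) ≤ M := zee_le_Mof hN x (j₀, σ)
  have hsplit : ∑ j, ε * (P t i j * x j)
      = (∑ j ∈ Finset.univ.erase j₀, ε * (P t i j * x j)) + ε * (P t i j₀ * x j₀) :=
    (Finset.sum_erase_add _ _ (Finset.mem_univ j₀)).symm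
  have habs_split : (∑ j ∈ Finset.univ.erase j₀, |P t i j|) = 1 - |P t i j₀| := by
    have h1 := Finset.sum_erase_add Finset.univ (fun j => |P t i j|) (Finset.mem_univ j₀)
    have h2 := habs t i
    linarith
  have hsum1 : (∑ j ∈ Finset.univ.erase j₀, ε * (P t i j * x j))
      ≤ (1 - |P t i j₀|) * M := by
    calc (∑ j ∈ Finset.univ.erase j₀, ε * (P t i j * x j))
        ≤ ∑ j ∈ Finset.univ.erase j₀, |P t i j| * M :=
          Finset.sum_le_sum fun j _ => hterm j
      _ = (1 - |P t i j₀|) * M := by rw [← Finset.sum_mul, habs_split]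
  have hfinal : zee (traj P x0 (t+1)) (i, τ)
      ≤ (1 - |P t i j₀|) * M + |P t i j₀| * zee x (j₀, σ) := by
    rw [hx', hsplit, hkey0]
    linarith
  nlinarith [hfinal, hq, hzM]

lemma Mof_step (habs : ∀ t i, ∑ j, |P t i j| = 1) (hN : 0 < N) (x0 : Fin N → ℝ)
    (t : ℕ) : Mof hN (traj P x0 (t+1)) ≤ Mof hN (traj P x0 t) := by
  apply Mof_le
  intro i
  set x : Fin N → ℝ := traj P x0 t with hx
  set M : ℝ := Mof hN x with hM
  calc |traj P x0 (t+1) i| = |∑ j, P t i j * x j| := by rw [traj_succ P x0 t i]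
    _ ≤ ∑ j, |P t i j * x j| := Finset.abs_sum_le_sum_abs _ _
    _ = ∑ j, |P t i j| * |x j| := by simp [abs_mul]
    _ ≤ ∑ j, |P t i j| * M :=
        Finset.sum_le_sum fun j _ =>
          mul_le_mul_of_nonneg_left (abs_le_Mof hN x j) (abs_nonneg _)
    _ = M := by rw [← Finset.sum_mul, habs t i, one_mul]

lemma Mof_anti (habs : ∀ t i, ∑ j, |P t i j| = 1) (hN : 0 < N) (x0 : Fin N → ℝ)
    {t t' : ℕ} (h : t ≤ t') : Mof hN (traj P x0 t') ≤ Mof hN (traj P x0 t) := by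
  induction t', h using Nat.le_induction with
  | base => exact le_refl _
  | succ n hn ih => exact le_trans (Mof_step P habs hN x0 n) ih

lemma small_step (hγ : 0 < γ) (habs : ∀ t i, ∑ j, |P t i j| = 1)
    (hdiag : ∀ t i, 0 < P t i i) (hlow : ∀ t i j, P t i j ≠ 0 → γ ≤ |P t i j|)
    (hN : 0 < N) (x0 : Fin N → ℝ) (a : ℕ) (c : ℝ) (t : ℕ) (hat : a ≤ t)
    (u v : Fin N × Bool) (h : u = v ∨ EdgeAt P t v u)
    (hs : zee (traj P x0 t) v ≤ Mof hN (traj P x0 a) - γ ^ (t - a) * c) :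
    zee (traj P x0 (t+1)) u ≤ Mof hN (traj P x0 a) - γ ^ (t + 1 - a) * c := by
  have hγ1 : γ ≤ 1 := gamma_le_one P γ hN habs hdiag hlow
  have h1 := step_bound P γ hγ habs hdiag hlow hN x0 t u v h
  have h2 := Mof_anti P habs hN x0 hat
  have hexp : t + 1 - a = (t - a) + 1 := by omega
  rw [hexp, pow_succ]
  nlinarith [h1, h2, hs, hγ.le, hγ1]

lemma small_stay (hγ : 0 < γ) (habs : ∀ t i, ∑ j, |P t i j| = 1)
    (hdiag : ∀ t i, 0 < P t i i) (hlow : ∀ t i j, P t i j ≠ 0 → γ ≤ |P t i j|)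
    (hN : 0 < N) (x0 : Fin N → ℝ) (a : ℕ) (c : ℝ) {t t' : ℕ} (hat : a ≤ t)
    (htt : t ≤ t') (v : Fin N × Bool)
    (hs : zee (traj P x0 t) v ≤ Mof hN (traj P x0 a) - γ ^ (t - a) * c) :
    zee (traj P x0 t') v ≤ Mof hN (traj P x0 a) - γ ^ (t' - a) * c := by
  induction t', htt using Nat.le_induction with
  | base => exact hs
  | succ n hn ih =>
    exact small_step P γ hγ habs hdiag hlow hN x0 a c n (le_trans hat hn) v v
      (Or.inl rfl) ih

lemma small_hop (hγ : 0 < γ) (habs : ∀ t i, ∑ j, |P t i j| = 1)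
    (hdiag : ∀ t i, 0 < P t i i) (hlow : ∀ t i j, P t i j ≠ 0 → γ ≤ |P t i j|)
    (hN : 0 < N) (x0 : Fin N → ℝ) (a : ℕ) (c : ℝ) (p q : ℕ) (hap : a ≤ p)
    (hpq : p ≤ q) (u v : Fin N × Bool) (h : u = v ∨ LiftEdge P p q v u)
    (hs : zee (traj P x0 p) v ≤ Mof hN (traj P x0 a) - γ ^ (p - a) * c) :
    zee (traj P x0 q) u ≤ Mof hN (traj P x0 a) - γ ^ (q - a) * c := by
  rcases h with rfl | ⟨s, hs1, hs2, he⟩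
  · exact small_stay P γ hγ habs hdiag hlow hN x0 a c hap hpq u hs
  · have h1 := small_stay P γ hγ habs hdiag hlow hN x0 a c hap hs1 v hs
    have h2 := small_step P γ hγ habs hdiag hlow hN x0 a c s (hap.trans hs1) u v
      (Or.inr he) h1
    exact small_stay P γ hγ habs hdiag hlow hN x0 a c (by omega) (by omega) u h2

end Analytic

theorem stmt15 {N : ℕ} (P : ℕ → Matrix (Fin N) (Fin N) ℝ) (γ : ℝ) (hγ : 0 < γ)
    (habs : ∀ t i, ∑ j, |P t i j| = 1) (hdiag : ∀ t i, 0 < P t i i)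
    (hlow : ∀ t i j, P t i j ≠ 0 → γ ≤ |P t i j|)
    (ts : ℕ → ℕ) (B : ℕ) (hts0 : ts 0 = 0) (hmono : ∀ k, ts k < ts (k + 1))
    (hbdd : ∀ k, ts (k + 1) - ts k ≤ B)
    -- over each interval the union graph contains a directed spanning tree
    (htree : ∀ k, ∃ v : Fin N, ∀ w, IntervalReach P (ts k) (ts (k + 1)) v w)
    -- and no bipartition of the root vertex set of the union graph (one part
    -- possibly empty) works simultaneously for all graphs of the interval
    (hnobal : ∀ k, ¬ ∃ f : Fin N → Bool, ∀ s, ts k ≤ s → s < ts (k + 1) →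
      ∀ i j : Fin N,
        (∀ w, IntervalReach P (ts k) (ts (k + 1)) i w) →
        (∀ w, IntervalReach P (ts k) (ts (k + 1)) j w) →
        i ≠ j → P s i j ≠ 0 → (f i = f j ↔ 0 < P s i j)) :
    ∀ x0 : Fin N → ℝ, Tendsto (fun t => traj P x0 t) atTop (nhds 0) := by
  classical
  -- dispose of the degenerate case N = 0
  rcases Nat.eq_zero_or_pos N with hN0 | hN
  · exfalso
    apply hnobal 0
    subst hN0
    exact ⟨fun i => i.elim0, fun s _ _ i => i.elim0⟩
  intro x0
  set X : ℕ → Fin N → ℝ := traj P x0 with hX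
  have hγ1 : γ ≤ 1 := gamma_le_one P γ hN habs hdiag hlow
  -- basic facts about ts
  have hts_add : ∀ k l, ts k ≤ ts (k + l) := by
    intro k l
    induction l with
    | zero => exact le_refl _
    | succ l ih => exact le_trans ih (le_of_lt (hmono (k + l)))
  have hts_mono : ∀ {k k' : ℕ}, k ≤ k' → ts k ≤ ts k' := by
    intro k k' h
    obtain ⟨l, rfl⟩ := Nat.exists_eq_add_of_le h
    exact hts_add k l
  have hts_bound : ∀ k l, ts (k + l) - ts k ≤ l * B := by
    intro k l
    induction l with
    | zero => simp
    | succ l ih =>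
      have h1 := hbdd (k + l)
      have h2 := hts_add k l
      have h3 : ts (k + l) ≤ ts (k + l + 1) := (hmono (k + l)).le
      show ts (k + l + 1) - ts k ≤ (l + 1) * B
      rw [Nat.succ_mul]
      omega
  -- cardinality of the lifted vertex set
  set n' : ℕ := Fintype.card (Fin N × Bool) with hn'
  have hVpos : 0 < n' := by
    rw [hn']
    exact @Fintype.card_pos _ _ ⟨(⟨0, hN⟩, true)⟩
  set m : ℕ := n' * n' with hm
  have hmpos : 0 < m := Nat.mul_pos hVpos hVpos
  set θ : ℝ := 1 - γ ^ (m * B) with hθ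
  have hpowpos : 0 < γ ^ (m * B) := pow_pos hγ _
  have hpowle : γ ^ (m * B) ≤ 1 := pow_le_one₀ hγ.le hγ1
  have hθ0 : 0 ≤ θ := by rw [hθ]; linarith
  have hθ1 : θ < 1 := by rw [hθ]; linarith
  -- the key contraction over a window of m intervals
  have contraction : ∀ k0 : ℕ,
      Mof hN (X (ts (k0 + m))) ≤ θ * Mof hN (X (ts k0)) := by
    intro k0
    set a : ℕ := ts k0 with ha
    set b : ℕ := ts (k0 + m) with hb
    set MA : ℝ := Mof hN (X a) with hMA
    set H : ℕ → (Fin N × Bool) → (Fin N × Bool) → Prop :=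
      fun k => LiftEdge P (ts (k0 + k)) (ts (k0 + k + 1)) with hH
    have hroots : ∀ k, ∃ r, ∀ u, ReflTransGen (H k) r u :=
      fun k => lift_rooted P (htree (k0 + k)) (hnobal (k0 + k))
    obtain ⟨ρ, hρ⟩ := strong_root H hroots hVpos
    have hHflip : ∀ k v u, H k v u → H k (negV v) (negV u) :=
      fun k v u h => liftEdge_flip P h
    have hρneg : ∀ w, negV ρ ∈ AncSet H m w m := by
      intro w
      have := ancSet_flip negV hHflip (hρ (negV w))
      rwa [negV_negV] at this
    -- pick the copy of the strong root with nonpositive value at time a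
    obtain ⟨ρ', hρ'mem, hρ'val⟩ :
        ∃ ρ', (∀ w, ρ' ∈ AncSet H m w m) ∧ zee (X a) ρ' ≤ 0 := by
      by_cases hz : zee (X a) ρ ≤ 0
      · exact ⟨ρ, fun w => hρ w, hz⟩
      · refine ⟨negV ρ, fun w => hρneg w, ?_⟩
        rw [zee_negV]
        linarith
    set c : ℝ := MA - zee (X a) ρ' with hc
    have hcMA : MA ≤ c := by rw [hc]; linarith
    -- propagation of smallness through the ancestor sets
    have prop : ∀ j, j ≤ m → ∀ w v : Fin N × Bool, v ∈ AncSet H m w j →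
        zee (X (ts (k0 + (m - j)))) v ≤ MA - γ ^ (ts (k0 + (m - j)) - a) * c →
        zee (X (ts (k0 + m))) w ≤ MA - γ ^ (ts (k0 + m) - a) * c := by
      intro j
      induction j with
      | zero =>
        intro _ w v hv hsm
        have hvw : v = w := by simpa [AncSet] using hv
        subst hvw
        simpa using hsm
      | succ j ih =>
        intro hjm w v hv hsm
        obtain ⟨u, hu, hedge⟩ := mem_ancSet_succ.mp hv
        have e1 : m - (j + 1) = m - 1 - j := by omega
        have e2 : k0 + (m - 1 - j) + 1 = k0 + (m - j) := by omega
        have hedge' : u = v ∨ LiftEdge P (ts (k0 + (m - 1 - j))) (ts (k0 + (m - j))) v u := by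
          rw [← e2]
          exact hedge
        have hsm' : zee (X (ts (k0 + (m - 1 - j)))) v ≤
            MA - γ ^ (ts (k0 + (m - 1 - j)) - a) * c := by
          rw [← e1]
          exact hsm
        have hhop := small_hop P γ hγ habs hdiag hlow hN x0 a c
          (ts (k0 + (m - 1 - j))) (ts (k0 + (m - j)))
          (hts_mono (Nat.le_add_right _ _)) (hts_mono (by omega)) u v hedge' hsm'
        exact ih (by omega) w u hu hhop
    -- start the propagation at ρ'
    have hstart : zee (X a) ρ' ≤ MA - γ ^ (a - a) * c := by
      rw [Nat.sub_self, pow_zero, one_mul, hc]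
      linarith
    have hsmall : ∀ w, zee (X b) w ≤ MA - γ ^ (b - a) * c := by
      intro w
      have h0 : k0 + (m - m) = k0 := by omega
      refine prop m le_rfl w ρ' (hρ'mem w) ?_
      rw [h0]
      exact hstart
    -- turn it into the contraction estimate
    have hba : b - a ≤ m * B := hts_bound k0 m
    have hpow : γ ^ (m * B) ≤ γ ^ (b - a) := pow_le_pow_of_le_one hγ.le hγ1 hba
    have hMA0 : 0 ≤ MA := Mof_nonneg hN (X a)
    have hbound : ∀ w, zee (X b) w ≤ θ * MA := by
      intro w
      have h1 := hsmall w
      have h2 : γ ^ (m * B) * MA ≤ γ ^ (b - a) * c :=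
        mul_le_mul hpow hcMA hMA0 (pow_nonneg hγ.le _)
      rw [hθ]
      nlinarith
    apply Mof_le
    intro i
    rw [abs_le]
    constructor
    · have := hbound (i, false)
      simp [zee] at this
      linarith
    · exact hbound (i, true)
  -- iterate the contraction
  have hgeo : ∀ jj : ℕ, Mof hN (X (ts (jj * m))) ≤ θ ^ jj * Mof hN (X 0) := by
    intro jj
    induction jj with
    | zero => simp [hts0]
    | succ jj ih =>
      have e : (jj + 1) * m = jj * m + m := by ring
      rw [e, pow_succ]
      calc Mof hN (X (ts (jj * m + m))) ≤ θ * Mof hN (X (ts (jj * m))) :=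
            contraction (jj * m)
        _ ≤ θ * (θ ^ jj * Mof hN (X 0)) := mul_le_mul_of_nonneg_left ih hθ0
        _ = θ ^ jj * θ * Mof hN (X 0) := by ring
  -- the maximum tends to zero
  have hMlim : Tendsto (fun t => Mof hN (X t)) atTop (nhds 0) := by
    rw [Metric.tendsto_atTop]
    intro ε hε
    have hseq : Tendsto (fun jj : ℕ => θ ^ jj * Mof hN (X 0)) atTop (nhds 0) := by
      simpa using
        (tendsto_pow_atTop_nhds_zero_of_lt_one hθ0 hθ1).mul_const (Mof hN (X 0))
    obtain ⟨J, hJ⟩ := (Metric.tendsto_atTop.mp hseq) ε hε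
    refine ⟨ts (J * m), fun t ht => ?_⟩
    have h1 := hJ J le_rfl
    rw [Real.dist_eq, sub_zero] at h1 ⊢
    have h2 : Mof hN (X t) ≤ Mof hN (X (ts (J * m))) := Mof_anti P habs hN x0 ht
    have h3 := hgeo J
    have h4 := Mof_nonneg hN (X t)
    have h5 : θ ^ J * Mof hN (X 0) ≤ |θ ^ J * Mof hN (X 0)| := le_abs_self _
    rw [abs_of_nonneg h4]
    linarith
  -- conclude coordinatewise
  rw [tendsto_pi_nhds]
  intro i
  simp only [Pi.zero_apply]
  refine squeeze_zero_norm (fun t => ?_) hMlim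
  simpa [Real.norm_eq_abs] using abs_le_Mof hN (X t) i
end

section
/- Let L be the signed Laplacian of a fixed signed graph G(L) containing a directed spanning tree, written in block form L = [[L₁₁, 0],[L₂₁, L₂₂]] with L₁₁ ∈ ℝ^{r×r} irreducible. If the subgraph G(L₁₁) is structurally unbalanced, then every solution of ẋ = −Lx converges to the zero vector. -/
open Matrix Filter

def StronglyConnected {α : Type*} (adj : α → α → Prop) : Prop :=
  ∀ a b, Relation.ReflTransGen adj a b

namespace Stmt16Aux

open NormedSpace Topology

/-- Equality case of the triangle inequality for finite sums in `ℂ`. -/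
lemma tri_eq {ι : Type*} [DecidableEq ι] (s : Finset ι) (f : ι → ℂ) (c : ι → ℝ)
    (h : ∀ j ∈ s, ‖f j‖ ≤ c j) (he : ‖∑ j ∈ s, f j‖ = ∑ j ∈ s, c j) :
    ∀ j ∈ s, ‖f j‖ = c j ∧ (∑ i ∈ s, c i) • f j = c j • (∑ i ∈ s, f i) := by
  have hsum_le : ∑ j ∈ s, c j ≤ ∑ j ∈ s, ‖f j‖ := he ▸ norm_sum_le s f
  have hnorm : ∀ j ∈ s, ‖f j‖ = c j := by
    intro j hj
    by_contra hne
    have hlt : ‖f j‖ < c j := lt_of_le_of_ne (h j hj) hne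
    have : ∑ i ∈ s, ‖f i‖ < ∑ i ∈ s, c i :=
      Finset.sum_lt_sum h ⟨j, hj, hlt⟩
    linarith
  intro j hj
  refine ⟨hnorm j hj, ?_⟩
  have hR : ‖f j + ∑ i ∈ s.erase j, f i‖ = ‖f j‖ + ‖∑ i ∈ s.erase j, f i‖ := by
    have h1 : f j + ∑ i ∈ s.erase j, f i = ∑ i ∈ s, f i := Finset.add_sum_erase s f hj
    have h2 : ∑ i ∈ s, ‖f i‖ = ‖f j‖ + ∑ i ∈ s.erase j, ‖f i‖ := (Finset.add_sum_erase s _ hj).symm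
    have h3 : ‖∑ i ∈ s.erase j, f i‖ ≤ ∑ i ∈ s.erase j, ‖f i‖ := norm_sum_le _ _
    have h4 : ∑ i ∈ s, c i = ∑ i ∈ s, ‖f i‖ :=
      (Finset.sum_congr rfl fun i hi => (hnorm i hi).symm)
    have h5 : ‖f j + ∑ i ∈ s.erase j, f i‖ = ∑ i ∈ s, ‖f i‖ := by rw [h1, he, h4]
    have h6 : ‖f j + ∑ i ∈ s.erase j, f i‖ ≤ ‖f j‖ + ‖∑ i ∈ s.erase j, f i‖ := norm_add_le _ _
    rw [h5, h2]
    have : ‖f j‖ + ‖∑ i ∈ s.erase j, f i‖ ≤ ‖f j‖ + ∑ i ∈ s.erase j, ‖f i‖ := by linarith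
    linarith [h5, h2, h6, h3]
  have hray : SameRay ℝ (f j) (∑ i ∈ s.erase j, f i) := sameRay_iff_norm_add.mpr hR
  have hray2 : SameRay ℝ (f j) (∑ i ∈ s, f i) := by
    rw [← Finset.add_sum_erase s f hj]
    exact (SameRay.refl (f j)).add_right hray
  have := hray2.norm_smul_eq
  rw [hnorm j hj, he] at this
  exact this.symm

/-- Extract an honest eigenvector from a generalized eigenvector. -/
lemma exists_eigenvec {K V : Type*} [Field K] [AddCommGroup V] [Module K V]
    (f : Module.End K V) (μ : K) :
    ∀ (k : ℕ) (w : V), ((f - μ • 1) ^ k) w = 0 → w ≠ 0 →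
      ∃ ω, ω ≠ 0 ∧ f ω = μ • ω := by
  intro k
  induction k with
  | zero => intro w h hw; simp at h; exact absurd h hw
  | succ k ih =>
    intro w h hw
    by_cases hy : (f - μ • 1) w = 0
    · refine ⟨w, hw, ?_⟩
      have : f w - μ • w = 0 := by
        simpa [LinearMap.sub_apply, LinearMap.smul_apply, Module.End.one_apply] using hy
      exact sub_eq_zero.mp this
    · refine ih ((f - μ • 1) w) ?_ hy
      rw [← Module.End.mul_apply, ← pow_succ]
      exact h


/-- Every eigenvalue of the complexified signed Laplacian has positive real part. -/
lemma spec_re_pos {r m : ℕ} (L : Matrix (Fin r ⊕ Fin m) (Fin r ⊕ Fin m) ℝ)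
    (hlap : ∀ i, L i i = ∑ j, if j ≠ i then |L i j| else 0)
    (hirr : ∀ a b : Fin r, Relation.ReflTransGen
      (fun j i : Fin r => i ≠ j ∧ L (Sum.inl i) (Sum.inl j) ≠ 0) a b)
    (htree : ∃ u : Fin r, ∀ v : Fin r ⊕ Fin m,
      Relation.ReflTransGen (fun j i => i ≠ j ∧ L i j ≠ 0) (Sum.inl u) v)
    (hUnbal : ¬ ∃ f : Fin r → Bool, ∀ i j, i ≠ j →
      L (Sum.inl i) (Sum.inl j) ≠ 0 → (f i = f j ↔ L (Sum.inl i) (Sum.inl j) < 0))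
    {μ : ℂ} {v : Fin r ⊕ Fin m → ℂ}
    (heig : ∀ i, ∑ j, (L i j : ℂ) * v j = μ * v i) (hv0 : v ≠ 0) :
    0 < μ.re := by
  classical
  -- r is positive
  have hr : 0 < r := by
    rcases Nat.eq_zero_or_pos r with h | h
    · exfalso; apply hUnbal; subst h
      exact ⟨fun _ => true, fun i => i.elim0⟩
    · exact h
  -- diagonal formula
  have hd : ∀ i, L i i = ∑ j ∈ Finset.univ.erase i, |L i j| := by
    intro i
    rw [hlap i, ← Finset.sum_filter]
    apply Finset.sum_congr _ (fun _ _ => rfl)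
    ext j; simp [Finset.mem_erase, Finset.mem_filter]
  have hd0 : ∀ i, 0 ≤ L i i := fun i =>
    (hd i) ▸ Finset.sum_nonneg (fun _ _ => abs_nonneg _)
  -- maximizer
  obtain ⟨i0, -, hi0⟩ := Finset.exists_max_image (Finset.univ)
    (fun i => ‖v i‖) ⟨Sum.inl ⟨0, hr⟩, Finset.mem_univ _⟩
  set M := ‖v i0‖ with hM_def
  have hmax : ∀ j, ‖v j‖ ≤ M := fun j => hi0 j (Finset.mem_univ _)
  have hM : 0 < M := by
    rcases lt_or_ge 0 M with h | h
    · exact h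
    · exfalso; apply hv0; funext j
      have := hmax j
      have : ‖v j‖ ≤ 0 := le_trans this h
      simpa using norm_le_zero_iff.mp this
  -- row manipulation
  have hrow : ∀ i, ∑ j ∈ Finset.univ.erase i, (L i j : ℂ) * v j
      = μ * v i - (L i i : ℂ) * v i := by
    intro i
    have h := heig i
    rw [← Finset.add_sum_erase _ _ (Finset.mem_univ i)] at h
    linear_combination h
  have hbnd : ∀ i, ‖∑ j ∈ Finset.univ.erase i, (L i j : ℂ) * v j‖ ≤ L i i * M := by
    intro i
    calc ‖∑ j ∈ Finset.univ.erase i, (L i j : ℂ) * v j‖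
        ≤ ∑ j ∈ Finset.univ.erase i, ‖(L i j : ℂ) * v j‖ := norm_sum_le _ _
      _ ≤ ∑ j ∈ Finset.univ.erase i, |L i j| * M := by
          apply Finset.sum_le_sum
          intro j _
          rw [norm_mul, Complex.norm_real, Real.norm_eq_abs]
          exact mul_le_mul_of_nonneg_left (hmax j) (abs_nonneg _)
      _ = L i i * M := by rw [← Finset.sum_mul, ← hd i]
  -- Gershgorin at the maximizer
  by_contra hre
  push_neg at hre
  have hmu0 : μ = 0 := by
    have h1 : ‖μ - (L i0 i0 : ℂ)‖ * M ≤ L i0 i0 * M := by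
      have hb := hbnd i0
      rw [hrow i0] at hb
      have : μ * v i0 - (L i0 i0 : ℂ) * v i0 = (μ - (L i0 i0 : ℂ)) * v i0 := by ring
      rwa [this, norm_mul] at hb
    have h2 : ‖μ - (L i0 i0 : ℂ)‖ ≤ L i0 i0 := le_of_mul_le_mul_right h1 hM
    have h3 : ‖μ - (L i0 i0 : ℂ)‖ ^ 2 ≤ (L i0 i0) ^ 2 := by
      have := norm_nonneg (μ - (L i0 i0 : ℂ))
      nlinarith
    have h4 : (μ.re - L i0 i0) ^ 2 + μ.im ^ 2 ≤ (L i0 i0) ^ 2 := by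
      rw [Complex.sq_norm, Complex.normSq_apply] at h3
      simp only [Complex.sub_re, Complex.sub_im, Complex.ofReal_re, Complex.ofReal_im] at h3
      nlinarith [h3]
    have hdi := hd0 i0
    have e1 : μ.re = 0 := by nlinarith
    have e2 : μ.im = 0 := by nlinarith
    exact Complex.ext e1 e2
  subst hmu0
  -- maximal entries
  set Pmax : (Fin r ⊕ Fin m) → Prop := fun i => M ≤ ‖v i‖ with hPmax
  -- key propagation lemma
  have key : ∀ i j, Pmax i → j ≠ i → L i j ≠ 0 →
      (Pmax j ∧ (-(L i j) : ℂ) * v j = ((|L i j| : ℝ) : ℂ) * v i) := by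
    intro i j hmi hji hLij
    have hMi : ‖v i‖ = M := le_antisymm (hmax i) hmi
    have hdpos : 0 < L i i := by
      have h1 : |L i j| ≤ L i i := by
        rw [hd i]
        exact Finset.single_le_sum (f := fun k => |L i k|)
          (fun _ _ => abs_nonneg _) (Finset.mem_erase.mpr ⟨hji, Finset.mem_univ _⟩)
      have := abs_pos.mpr hLij
      linarith
    have hsum : ∑ k ∈ Finset.univ.erase i, (L i k : ℂ) * v k = -((L i i : ℂ)) * v i := by
      rw [hrow i]; ring
    have hnorm_sum : ‖∑ k ∈ Finset.univ.erase i, (L i k : ℂ) * v k‖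
        = ∑ k ∈ Finset.univ.erase i, (|L i k| * M) := by
      rw [hsum, norm_mul, norm_neg, Complex.norm_real, Real.norm_eq_abs,
        abs_of_nonneg (hd0 i), hMi, ← Finset.sum_mul, ← hd i]
    have htri := tri_eq (Finset.univ.erase i) (fun k => (L i k : ℂ) * v k)
      (fun k => |L i k| * M)
      (fun k _ => by
        rw [norm_mul, Complex.norm_real, Real.norm_eq_abs]
        exact mul_le_mul_of_nonneg_left (hmax k) (abs_nonneg _))
      hnorm_sum
    obtain ⟨hn0, hal0⟩ := htri j (Finset.mem_erase.mpr ⟨hji, Finset.mem_univ _⟩)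
    have hn : ‖(L i j : ℂ) * v j‖ = |L i j| * M := hn0
    have hal : ((∑ k ∈ Finset.univ.erase i, (|L i k| * M)) : ℝ) • ((L i j : ℂ) * v j)
        = (|L i j| * M) • ∑ k ∈ Finset.univ.erase i, (L i k : ℂ) * v k := hal0
    have habsj : 0 < |L i j| := abs_pos.mpr hLij
    constructor
    · -- Pmax j
      rw [norm_mul, Complex.norm_real, Real.norm_eq_abs] at hn
      have h' : ‖v j‖ = M := mul_left_cancel₀ (ne_of_gt habsj) hn
      exact le_of_eq h'.symm
    · -- alignment
      rw [hsum] at hal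
      have hC : ((∑ k ∈ Finset.univ.erase i, (|L i k| * M) : ℝ) : ℂ) ≠ 0 := by
        rw [← Finset.sum_mul, ← hd i]
        push_cast
        exact mul_ne_zero (by exact_mod_cast ne_of_gt hdpos) (by exact_mod_cast ne_of_gt hM)
      have hsumc : ((∑ k ∈ Finset.univ.erase i, (|L i k| * M) : ℝ) : ℂ)
          = (L i i : ℂ) * (M : ℂ) := by
        rw [← Finset.sum_mul, ← hd i]; push_cast; ring
      have hdiv : ((L i i : ℂ)) ≠ 0 := by exact_mod_cast ne_of_gt hdpos
      have hMne : ((M : ℝ) : ℂ) ≠ 0 := by exact_mod_cast ne_of_gt hM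
      have hfin := mul_left_cancel₀ (mul_ne_zero hdiv hMne)
        (show ((L i i : ℂ) * (M : ℂ)) * (-(L i j : ℂ) * v j)
            = ((L i i : ℂ) * (M : ℂ)) * (((|L i j| : ℝ) : ℂ) * v i) by
          rw [Complex.real_smul, Complex.real_smul] at hal
          rw [hsumc] at hal
          push_cast at hal
          linear_combination -hal)
      exact hfin
  -- pull maximality back along reachability
  have hback : ∀ a b : Fin r ⊕ Fin m,
      Relation.ReflTransGen (fun j i => i ≠ j ∧ L i j ≠ 0) a b → Pmax b → Pmax a := by
    intro a b h
    induction h with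
    | refl => exact id
    | tail hp e ih => exact fun hb => ih ((key _ _ hb e.1.symm e.2).1)
  obtain ⟨u, hu⟩ := htree
  have hPi0 : Pmax i0 := le_of_eq hM_def
  have hmu : Pmax (Sum.inl u) := hback _ _ (hu i0) hPi0
  have hmaxr : ∀ i : Fin r, Pmax (Sum.inl i) := by
    intro i
    refine hback _ _ ?_ hmu
    refine Relation.ReflTransGen.lift Sum.inl ?_ i u (hirr i u)
    intro a b hab
    exact ⟨fun h => hab.1 (Sum.inl_injective h), hab.2⟩
  have hvne : ∀ i : Fin r, v (Sum.inl i) ≠ 0 := by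
    intro i h
    have h2 : M ≤ ‖v (Sum.inl i)‖ := hmaxr i
    rw [h] at h2
    simp at h2
    linarith
  -- sign propagation on root edges
  have hsgn : ∀ i j : Fin r, i ≠ j → L (Sum.inl i) (Sum.inl j) ≠ 0 →
      (L (Sum.inl i) (Sum.inl j) < 0 ∧ v (Sum.inl j) = v (Sum.inl i)) ∨
      (0 < L (Sum.inl i) (Sum.inl j) ∧ v (Sum.inl j) = -v (Sum.inl i)) := by
    intro i j hij hL
    have hne : (Sum.inl j : Fin r ⊕ Fin m) ≠ Sum.inl i :=
      fun h => hij (Sum.inl_injective h).symm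
    have hal := (key (Sum.inl i) (Sum.inl j) (hmaxr i) hne hL).2
    rcases lt_or_gt_of_ne hL with hlt | hgt
    · left
      refine ⟨hlt, ?_⟩
      rw [abs_of_neg hlt] at hal
      push_cast at hal
      have hc : (-(L (Sum.inl i) (Sum.inl j) : ℂ)) ≠ 0 :=
        neg_ne_zero.mpr (by exact_mod_cast hL)
      exact mul_left_cancel₀ hc (by linear_combination hal)
    · right
      refine ⟨hgt, ?_⟩
      rw [abs_of_pos hgt] at hal
      push_cast at hal
      have hc : ((L (Sum.inl i) (Sum.inl j) : ℂ)) ≠ 0 := by exact_mod_cast hL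
      have : (L (Sum.inl i) (Sum.inl j) : ℂ) * v (Sum.inl j)
          = (L (Sum.inl i) (Sum.inl j) : ℂ) * (-v (Sum.inl i)) := by
        linear_combination -hal
      exact mul_left_cancel₀ hc this
  set c := v (Sum.inl u) with hc_def
  have hcne : c ≠ 0 := hvne u
  have hval : ∀ i : Fin r, v (Sum.inl i) = c ∨ v (Sum.inl i) = -c := by
    have : ∀ i : Fin r, Relation.ReflTransGen
        (fun j i : Fin r => i ≠ j ∧ L (Sum.inl i) (Sum.inl j) ≠ 0) u i →
        (v (Sum.inl i) = c ∨ v (Sum.inl i) = -c) := by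
      intro i h
      induction h with
      | refl => left; rfl
      | @tail b i hp e ih =>
        rcases hsgn i b e.1 e.2 with ⟨_, hv⟩ | ⟨_, hv⟩
        · rcases ih with h | h
          · left; rw [← hv, h]
          · right; rw [← hv, h]
        · have hvi : v (Sum.inl i) = -v (Sum.inl b) := by
            rw [hv, neg_neg]
          rcases ih with h | h
          · right; rw [hvi, h]
          · left; rw [hvi, h, neg_neg]
    exact fun i => this i (hirr u i)
  have hnegc : -c ≠ c := by
    intro h
    apply hcne
    have : (2 : ℂ) * c = 0 := by linear_combination -h
    simpa using this
  -- contradiction with structural unbalance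
  apply hUnbal
  refine ⟨fun i => decide (v (Sum.inl i) = c), ?_⟩
  intro i j hij hL
  rcases hsgn i j hij hL with ⟨hlt, hv⟩ | ⟨hgt, hv⟩
  · exact iff_of_true (decide_eq_decide.mpr (by rw [hv])) hlt
  · refine iff_of_false ?_ (not_lt.mpr hgt.le)
    rcases hval i with h | h <;>
      simp [hv, h, hnegc, neg_neg, decide_eq_decide]

section Analytic

variable {n : Type*} [Fintype n] [DecidableEq n]

/-- The real-linear continuous endomorphism of `n → ℂ` given by a complex matrix. -/
noncomputable def matCLM (M : Matrix n n ℂ) : (n → ℂ) →L[ℝ] (n → ℂ) :=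
  LinearMap.toContinuousLinearMap (M.mulVecLin.restrictScalars ℝ)

@[simp] lemma matCLM_apply (M : Matrix n n ℂ) (z : n → ℂ) :
    matCLM M z = M *ᵥ z := rfl

lemma matCLM_pow_apply (M : Matrix n n ℂ) (k : ℕ) (z : n → ℂ) :
    (matCLM M ^ k) z = (M ^ k) *ᵥ z := by
  induction k generalizing z with
  | zero => simp [Matrix.one_mulVec]
  | succ k ih =>
    rw [pow_succ', ContinuousLinearMap.mul_apply, matCLM_apply, ih,
      Matrix.mulVec_mulVec, ← pow_succ']

lemma mulVecLin_pow_apply (M : Matrix n n ℂ) (k : ℕ) (z : n → ℂ) :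
    (M.mulVecLin ^ k) z = (M ^ k) *ᵥ z := by
  induction k generalizing z with
  | zero => simp [Matrix.one_mulVec]
  | succ k ih =>
    rw [pow_succ', Module.End.mul_apply, Matrix.mulVecLin_apply, ih,
      Matrix.mulVec_mulVec, ← pow_succ']

lemma smul_matCLM_pow_apply (t : ℝ) (M : Matrix n n ℂ) (k : ℕ) (z : n → ℂ) :
    ((t • matCLM M) ^ k) z = t ^ k • ((M ^ k) *ᵥ z) := by
  induction k generalizing z with
  | zero => simp [Matrix.one_mulVec]
  | succ k ih =>
    rw [pow_succ', ContinuousLinearMap.mul_apply, ContinuousLinearMap.smul_apply,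
      matCLM_apply, ih, Matrix.mulVec_smul, smul_smul, Matrix.mulVec_mulVec,
      ← pow_succ', ← pow_succ']

/-- Evaluation of the exponential of a scalar multiple of the identity. -/
lemma smul_one_pow_apply (c : ℂ) (k : ℕ) (z : n → ℂ) :
    ((c • (1 : (n → ℂ) →L[ℝ] (n → ℂ))) ^ k) z = c ^ k • z := by
  induction k generalizing z with
  | zero => simp
  | succ k ih =>
    rw [pow_succ', ContinuousLinearMap.mul_apply, ContinuousLinearMap.smul_apply,
      ContinuousLinearMap.one_apply, ih, pow_succ', smul_smul]

lemma exp_smul_one_apply (c : ℂ) (z : n → ℂ) :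
    NormedSpace.exp (c • (1 : (n → ℂ) →L[ℝ] (n → ℂ))) z = Complex.exp c • z := by
  set X := c • (1 : (n → ℂ) →L[ℝ] (n → ℂ)) with hX
  have h1 : NormedSpace.exp X z = ∑' k : ℕ, ((k.factorial : ℝ))⁻¹ • c ^ k • z := by
    calc NormedSpace.exp X z
        = ((ContinuousLinearMap.apply ℝ (n → ℂ)) z)
            (∑' k : ℕ, ((k.factorial : ℝ))⁻¹ • X ^ k) := by
          rw [NormedSpace.exp_eq_tsum ℝ]
          rfl
      _ = ∑' k : ℕ, ((ContinuousLinearMap.apply ℝ (n → ℂ)) z)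
            (((k.factorial : ℝ))⁻¹ • X ^ k) :=
          ContinuousLinearMap.map_tsum _ (NormedSpace.expSeries_summable' (𝕂 := ℝ) X)
      _ = ∑' k : ℕ, ((k.factorial : ℝ))⁻¹ • c ^ k • z := by
          refine tsum_congr fun k => ?_
          simp only [ContinuousLinearMap.apply_apply, ContinuousLinearMap.smul_apply, hX,
              smul_one_pow_apply]
  have h2 : Complex.exp c = ∑' k : ℕ, ((k.factorial : ℝ))⁻¹ • c ^ k := by
    rw [Complex.exp_eq_exp_ℂ, NormedSpace.exp_eq_tsum ℂ]
    refine tsum_congr fun k => ?_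
    rw [smul_eq_mul, Complex.real_smul]
    push_cast
    ring
  rw [h1, h2]
  rw [← (NormedSpace.expSeries_summable' (𝕂 := ℝ) (c : ℂ)).tsum_smul_const z]
  exact tsum_congr fun k => by rw [smul_assoc]

/-- Evaluation of the exponential on a vector killed by a matrix power. -/
lemma exp_matCLM_nilp (N : Matrix n n ℂ) (k : ℕ) (z : n → ℂ)
    (hz : (N ^ k) *ᵥ z = 0) (t : ℝ) :
    NormedSpace.exp (t • matCLM N) z
      = ∑ j ∈ Finset.range k, (((j.factorial : ℝ))⁻¹ * t ^ j) • ((N ^ j) *ᵥ z) := by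
  have h1 : NormedSpace.exp (t • matCLM N) z
      = ∑' j : ℕ, (((j.factorial : ℝ))⁻¹ * t ^ j) • ((N ^ j) *ᵥ z) := by
    calc NormedSpace.exp (t • matCLM N) z
        = ((ContinuousLinearMap.apply ℝ (n → ℂ)) z)
            (∑' j : ℕ, ((j.factorial : ℝ))⁻¹ • (t • matCLM N) ^ j) := by
          rw [NormedSpace.exp_eq_tsum ℝ]
          rfl
      _ = ∑' j : ℕ, ((ContinuousLinearMap.apply ℝ (n → ℂ)) z)
            (((j.factorial : ℝ))⁻¹ • (t • matCLM N) ^ j) :=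
          ContinuousLinearMap.map_tsum _
            (NormedSpace.expSeries_summable' (𝕂 := ℝ) (t • matCLM N))
      _ = ∑' j : ℕ, (((j.factorial : ℝ))⁻¹ * t ^ j) • ((N ^ j) *ᵥ z) := by
          refine tsum_congr fun j => ?_
          simp only [ContinuousLinearMap.apply_apply, ContinuousLinearMap.smul_apply,
              smul_matCLM_pow_apply, smul_smul]
  rw [h1]
  refine tsum_eq_sum fun b hb => ?_
  have hkb : k ≤ b := by simpa using hb
  have hzero : (N ^ b) *ᵥ z = 0 := by
    have : N ^ b = N ^ (b - k) * N ^ k := by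
      rw [← pow_add, Nat.sub_add_cancel hkb]
    rw [this, ← Matrix.mulVec_mulVec, hz, Matrix.mulVec_zero]
  rw [hzero, smul_zero]

lemma tendsto_pow_exp_neg {a : ℝ} (ha : 0 < a) (j : ℕ) :
    Tendsto (fun t : ℝ => t ^ j * Real.exp (-(a * t))) atTop (𝓝 0) := by
  have h1 : Tendsto (fun t : ℝ => a * t) atTop atTop :=
    Tendsto.const_mul_atTop ha tendsto_id
  have h2 := (Real.tendsto_pow_mul_exp_neg_atTop_nhds_zero j).comp h1
  have h3 : Tendsto (fun t : ℝ => (a⁻¹) ^ j * ((a * t) ^ j * Real.exp (-(a * t))))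
      atTop (𝓝 0) := by
    simpa using h2.const_mul ((a⁻¹) ^ j)
  refine h3.congr fun t => ?_
  have hane : a ≠ 0 := ne_of_gt ha
  field_simp [mul_pow]
  rw [← mul_pow, ← mul_assoc]
  simp [hane]

/-- Decay of the exponential when all eigenvalues of `A` have positive real part. -/
lemma exp_tendsto_zero (A : Matrix n n ℂ)
    (hspec : ∀ (μ : ℂ) (w : n → ℂ), A *ᵥ w = μ • w → w ≠ 0 → 0 < μ.re)
    (z : n → ℂ) :
    Tendsto (fun t : ℝ => NormedSpace.exp (t • matCLM (-A)) z) atTop (𝓝 0) := by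
  have hsmulc : ∀ (s : ℝ) (ζ : n → ℂ), s • ζ = ((s : ℂ)) • ζ := by
    intro s ζ
    rw [← Complex.coe_algebraMap, algebraMap_smul]
  have htop : z ∈ ⨆ μ : ℂ, Module.End.maxGenEigenspace (Matrix.mulVecLin A) μ := by
    rw [Module.End.iSup_maxGenEigenspace_eq_top]; trivial
  refine Submodule.iSup_induction
    (motive := fun ζ : n → ℂ => Tendsto (fun t : ℝ => NormedSpace.exp (t • matCLM (-A)) ζ)
      atTop (𝓝 0))
    _ htop (fun μ w hw => ?_) ?_ (fun w₁ w₂ h1 h2 => ?_)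
  · -- main case: generalized eigenvector
    rw [Module.End.mem_maxGenEigenspace] at hw
    obtain ⟨k, hk⟩ := hw
    by_cases hw0 : w = 0
    · subst hw0
      simp only [map_zero]
      exact tendsto_const_nhds
    have hμ : 0 < μ.re := by
      obtain ⟨ω, hω0, hωeig⟩ := exists_eigenvec (Matrix.mulVecLin A) μ k w hk hw0
      exact hspec μ ω (by simpa [Matrix.mulVecLin_apply] using hωeig) hω0
    set N : Matrix n n ℂ := μ • 1 - A with hN
    have hNk : (N ^ k) *ᵥ w = 0 := by
      have hlin : N.mulVecLin = -(Matrix.mulVecLin A - μ • 1) := by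
        apply LinearMap.ext; intro ζ
        simp [hN, Matrix.mulVecLin_apply, Matrix.sub_mulVec, Matrix.smul_mulVec,
          Matrix.one_mulVec]
      have hpw : (N ^ k) *ᵥ w = ((N.mulVecLin) ^ k) w := (mulVecLin_pow_apply N k w).symm
      rw [hpw, hlin]
      have hneg : -(A.mulVecLin - μ • 1) = (-1 : ℂ) • (A.mulVecLin - μ • 1) :=
        (neg_one_smul ℂ _).symm
      rw [hneg, smul_pow, LinearMap.smul_apply, hk, smul_zero]
    have hform : ∀ t : ℝ, NormedSpace.exp (t • matCLM (-A)) w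
        = Complex.exp (-((t : ℂ) * μ)) •
          ∑ j ∈ Finset.range k, (((j.factorial : ℝ))⁻¹ * t ^ j) • ((N ^ j) *ᵥ w) := by
      intro t
      have hsplit : t • matCLM (-A)
          = (-((t : ℂ) * μ)) • (1 : (n → ℂ) →L[ℝ] (n → ℂ)) + t • matCLM N := by
        apply ContinuousLinearMap.ext; intro ζ
        simp only [ContinuousLinearMap.add_apply, ContinuousLinearMap.smul_apply,
          ContinuousLinearMap.one_apply, matCLM_apply, hN, Matrix.sub_mulVec,
          Matrix.smul_mulVec, Matrix.one_mulVec, Matrix.neg_mulVec, smul_sub]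
        rw [hsmulc t, hsmulc t, smul_smul, smul_neg, neg_smul]
        abel
      have hcomm : Commute ((-((t : ℂ) * μ)) • (1 : (n → ℂ) →L[ℝ] (n → ℂ)))
          (t • matCLM N) := by
        apply ContinuousLinearMap.ext; intro ζ
        simp only [ContinuousLinearMap.mul_apply, ContinuousLinearMap.smul_apply,
          ContinuousLinearMap.one_apply, matCLM_apply, Matrix.mulVec_smul]
        rw [smul_comm]
      rw [hsplit, NormedSpace.exp_add_of_commute_of_mem_ball (𝕂 := ℝ) hcomm
          ((NormedSpace.expSeries_radius_eq_top ℝ ((n → ℂ) →L[ℝ] (n → ℂ))).symm ▸ edist_lt_top _ _)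
          ((NormedSpace.expSeries_radius_eq_top ℝ ((n → ℂ) →L[ℝ] (n → ℂ))).symm ▸ edist_lt_top _ _), ContinuousLinearMap.mul_apply,
        exp_matCLM_nilp N k w hNk t, exp_smul_one_apply]
    have hterm : ∀ j ∈ Finset.range k,
        Tendsto (fun t : ℝ => Complex.exp (-((t : ℂ) * μ)) •
          ((((j.factorial : ℝ))⁻¹ * t ^ j) • ((N ^ j) *ᵥ w))) atTop (𝓝 0) := by
      intro j _
      have hbound : Tendsto (fun t : ℝ => (((j.factorial : ℝ))⁻¹ * ‖(N ^ j) *ᵥ w‖) *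
          (t ^ j * Real.exp (-(μ.re * t)))) atTop (𝓝 0) := by
        simpa using (tendsto_pow_exp_neg hμ j).const_mul
          (((j.factorial : ℝ))⁻¹ * ‖(N ^ j) *ᵥ w‖)
      refine squeeze_zero_norm' ?_ hbound
      filter_upwards [eventually_ge_atTop (0 : ℝ)] with t ht
      have hre : (-((t : ℂ) * μ)).re = -(μ.re * t) := by
        simp [Complex.neg_re, Complex.mul_re]
        ring
      rw [norm_smul, norm_smul, Complex.norm_exp, hre,
        Real.norm_eq_abs]
      have habs : |((j.factorial : ℝ))⁻¹ * t ^ j| = ((j.factorial : ℝ))⁻¹ * t ^ j :=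
        abs_of_nonneg (by positivity)
      rw [habs]
      apply le_of_eq
      ring
    have hfinal : Tendsto (fun t : ℝ => ∑ j ∈ Finset.range k,
        Complex.exp (-((t : ℂ) * μ)) •
          ((((j.factorial : ℝ))⁻¹ * t ^ j) • ((N ^ j) *ᵥ w))) atTop (𝓝 0) := by
      have := tendsto_finset_sum (Finset.range k) hterm
      simpa using this
    refine (tendsto_congr hform).mpr ?_
    refine (tendsto_congr (fun t => Finset.smul_sum)).mpr hfinal
  · -- zero
    simp only [map_zero]
    exact tendsto_const_nhds
  · -- additivity
    have h12 := h1.add h2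
    simp only [map_add]
    simpa using h12

end Analytic

end Stmt16Aux

open Topology in
theorem stmt16 {r m : ℕ}
    (L : Matrix (Fin r ⊕ Fin m) (Fin r ⊕ Fin m) ℝ)
    -- L is a signed Laplacian: the diagonal entry is the sum of the absolute
    -- values of the off-diagonal entries of its row (l_ij = -a_ij for j ∈ N_i)
    (hlap : ∀ i, L i i = ∑ j, if j ≠ i then |L i j| else 0)
    -- block lower-triangular form: L₁₂ = 0
    (hblock : ∀ (i : Fin r) (j : Fin m), L (Sum.inl i) (Sum.inr j) = 0)
    -- L₁₁ irreducible: G(L₁₁) strongly connected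
    (hirr : StronglyConnected (fun j i : Fin r =>
      i ≠ j ∧ L (Sum.inl i) (Sum.inl j) ≠ 0))
    -- G(L) contains a directed spanning tree (rooted in G(L₁₁))
    (htree : ∃ u : Fin r, ∀ v : Fin r ⊕ Fin m,
      Relation.ReflTransGen (fun j i => i ≠ j ∧ L i j ≠ 0) (Sum.inl u) v)
    -- G(L₁₁) structurally unbalanced (edge sign = sgn(a_ij) = sgn(-l_ij))
    (hUnbal : ¬ ∃ f : Fin r → Bool, ∀ i j, i ≠ j →
      L (Sum.inl i) (Sum.inl j) ≠ 0 → (f i = f j ↔ L (Sum.inl i) (Sum.inl j) < 0)) :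
    -- every solution of ẋ = -L x converges to zero
    ∀ x : ℝ → (Fin r ⊕ Fin m → ℝ),
      (∀ t, HasDerivAt x (-(L *ᵥ x t)) t) →
      Tendsto x atTop (nhds 0) := by
  intro x hx
  classical
  set A : Matrix (Fin r ⊕ Fin m) (Fin r ⊕ Fin m) ℂ := fun i j => ((L i j : ℝ) : ℂ) with hA
  have hspec : ∀ (μ : ℂ) (w : (Fin r ⊕ Fin m) → ℂ), A *ᵥ w = μ • w → w ≠ 0 → 0 < μ.re := by
    intro μ w hw hw0
    refine Stmt16Aux.spec_re_pos L hlap hirr htree hUnbal ?_ hw0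
    intro i
    have h := congrFun hw i
    simpa [hA, Matrix.mulVec, dotProduct] using h
  set ξ : ℝ → (Fin r ⊕ Fin m → ℂ) := fun t i => ((x t i : ℝ) : ℂ) with hξdef
  have hξ : ∀ t, HasDerivAt ξ (Stmt16Aux.matCLM (-A) (ξ t)) t := by
    intro t
    refine hasDerivAt_pi.mpr fun i => ?_
    have hi := hasDerivAt_pi.mp (hx t) i
    have hci := (Complex.ofRealCLM.hasFDerivAt).comp_hasDerivAt t hi
    convert hci using 1
    show Stmt16Aux.matCLM (-A) (ξ t) i = Complex.ofRealCLM ((-(L *ᵥ x t)) i)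
    simp only [Stmt16Aux.matCLM_apply, Matrix.mulVec, dotProduct, Matrix.neg_apply,
      Pi.neg_apply, Complex.ofRealCLM_apply, hA, hξdef]
    push_cast
    rw [← Finset.sum_neg_distrib]
    exact Finset.sum_congr rfl fun j _ => by
      change -((L i j : ℂ)) * ((x t j : ℝ) : ℂ) = _; ring
    rfl
  set Bop : ((Fin r ⊕ Fin m) → ℂ) →L[ℝ] ((Fin r ⊕ Fin m) → ℂ) :=
    Stmt16Aux.matCLM (-A) with hBop
  set y : ℝ → (Fin r ⊕ Fin m → ℂ) := fun t => NormedSpace.exp (t • Bop) (ξ 0) with hy_def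
  have hy : ∀ t, HasDerivAt y (Bop (y t)) t := by
    intro t
    have hd := hasDerivAt_exp_smul_const' (𝕂 := ℝ) Bop t
    have h2 := (((ContinuousLinearMap.apply ℝ ((Fin r ⊕ Fin m) → ℂ)) (ξ 0)).hasFDerivAt
      ).comp_hasDerivAt t hd
    exact h2
  have huniq : ∀ T : ℝ, 0 ≤ T → ξ T = y T := by
    intro T hT
    have key := ODE_solution_unique (v := fun _ w => Bop w) (K := ‖Bop‖₊)
      (f := ξ) (g := y) (a := 0) (b := T)
      (fun _ => Bop.lipschitz)
      (fun t _ => (hξ t).continuousAt.continuousWithinAt)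
      (fun t _ => (hξ t).hasDerivWithinAt)
      (fun t _ => (hy t).continuousAt.continuousWithinAt)
      (fun t _ => (hy t).hasDerivWithinAt)
      (by
        show ξ 0 = NormedSpace.exp ((0 : ℝ) • Bop) (ξ 0)
        rw [zero_smul ℝ Bop, NormedSpace.exp_zero, ContinuousLinearMap.one_apply])
    exact key ⟨hT, le_rfl⟩
  have hdecay : Tendsto y atTop (𝓝 0) := Stmt16Aux.exp_tendsto_zero A hspec (ξ 0)
  have hξ0 : Tendsto ξ atTop (𝓝 0) := by
    refine hdecay.congr' ?_
    filter_upwards [eventually_ge_atTop (0 : ℝ)] with t ht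
    exact (huniq t ht).symm
  rw [tendsto_pi_nhds]
  intro i
  have hti : Tendsto (fun t => ξ t i) atTop (𝓝 0) := by
    have h := tendsto_pi_nhds.mp hξ0 i
    simpa using h
  have hre := (Complex.continuous_re.tendsto 0).comp hti
  have : Tendsto (fun t => x t i) atTop (𝓝 0) := by
    refine hre.congr' ?_ |>.mono_right ?_
    · exact Filter.Eventually.of_forall fun t => Complex.ofReal_re (x t i)
    · simp
  simpa using this
end

section
/- Let L be the signed Laplacian of a strongly connected signed graph G(L) that is structurally balanced with at least one negative edge, with bipartition V₁, V₂. Let D be the diagonal matrix with entries +1 on V₁ and −1 on V₂. Then DLD is the ordinary (nonnegative-weight) Laplacian of a strongly connected digraph, and every solution of ẋ = −Lx converges to c·D𝟙 where c = ξᵀDx(0) and ξ is the normalized left null vector of DLD; in particular the system polarizes. -/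
open Matrix Filter MeasureTheory

section Stmt17Aux
open NormedSpace

attribute [local instance] Matrix.linftyOpNormedAddCommGroup Matrix.linftyOpNormedSpace
  Matrix.linftyOpNormedRing Matrix.linftyOpNormedAlgebra

variable {N : ℕ}

private noncomputable def eCLM (i j : Fin N) : Matrix (Fin N) (Fin N) ℝ →L[ℝ] ℝ :=
  LinearMap.toContinuousLinearMap
    { toFun := fun X => X i j
      map_add' := fun _ _ => rfl
      map_smul' := fun _ _ => rfl }

private lemma eCLM_apply (i j : Fin N) (X : Matrix (Fin N) (Fin N) ℝ) : eCLM i j X = X i j := rfl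

private lemma summable_exp_entry (A : Matrix (Fin N) (Fin N) ℝ) (i j : Fin N) :
    Summable fun n : ℕ => (n.factorial : ℝ)⁻¹ * (A ^ n) i j := by
  have hsum : Summable fun n : ℕ => (n.factorial : ℝ)⁻¹ • A ^ n := expSeries_summable' A
  have := hsum.map (eCLM i j) (eCLM i j).continuous
  simpa [eCLM_apply, Function.comp_def] using this

private lemma exp_entry_eq (A : Matrix (Fin N) (Fin N) ℝ) (i j : Fin N) :
    exp A i j = ∑' n : ℕ, (n.factorial : ℝ)⁻¹ * (A ^ n) i j := by
  have hsum : Summable fun n : ℕ => (n.factorial : ℝ)⁻¹ • A ^ n := expSeries_summable' A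
  have h1 : exp A i j = eCLM i j (exp A) := rfl
  rw [h1, exp_eq_tsum ℝ, (eCLM i j).map_tsum hsum]
  simp [eCLM_apply]

private lemma pow_entry_nonneg {A : Matrix (Fin N) (Fin N) ℝ} (hA : ∀ i j, 0 ≤ A i j) :
    ∀ (n : ℕ) (i j : Fin N), 0 ≤ (A ^ n) i j := by
  intro n
  induction n with
  | zero => intro i j; simp [Matrix.one_apply]; split <;> norm_num
  | succ m ih =>
      intro i j
      rw [pow_succ, Matrix.mul_apply]
      exact Finset.sum_nonneg fun k _ => mul_nonneg (ih i k) (hA k j)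

private lemma exp_entry_nonneg {A : Matrix (Fin N) (Fin N) ℝ} (hA : ∀ i j, 0 ≤ A i j)
    (i j : Fin N) : 0 ≤ exp A i j := by
  rw [exp_entry_eq]
  exact tsum_nonneg fun n => mul_nonneg (by positivity) (pow_entry_nonneg hA n i j)

private lemma exp_entry_pos {A : Matrix (Fin N) (Fin N) ℝ} (hA : ∀ i j, 0 ≤ A i j)
    {i j : Fin N} {k : ℕ} (hk : 0 < (A ^ k) i j) : 0 < exp A i j := by
  rw [exp_entry_eq]
  have hterm : (0:ℝ) < (k.factorial : ℝ)⁻¹ * (A ^ k) i j :=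
    mul_pos (inv_pos.2 (by exact_mod_cast k.factorial_pos)) hk
  refine lt_of_lt_of_le hterm ?_
  exact Summable.le_tsum (summable_exp_entry A i j) k fun n _ =>
    mul_nonneg (by positivity) (pow_entry_nonneg hA n i j)

private noncomputable def mvCLM (v : Fin N → ℝ) : Matrix (Fin N) (Fin N) ℝ →L[ℝ] (Fin N → ℝ) :=
  LinearMap.toContinuousLinearMap
    { toFun := fun X => X *ᵥ v
      map_add' := fun A B => Matrix.add_mulVec A B v
      map_smul' := fun c A => by simpa using Matrix.smul_mulVec c A v }

private noncomputable def vmCLM (ξ : Fin N → ℝ) : Matrix (Fin N) (Fin N) ℝ →L[ℝ] (Fin N → ℝ) :=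
  LinearMap.toContinuousLinearMap
    { toFun := fun X => ξ ᵥ* X
      map_add' := fun A B => by
        funext j
        simp [Matrix.vecMul, dotProduct, Matrix.add_apply, mul_add, Finset.sum_add_distrib]
      map_smul' := fun c A => by
        funext j
        simp only [Matrix.vecMul, dotProduct, Matrix.smul_apply, RingHom.id_apply,
          Pi.smul_apply, smul_eq_mul, Finset.mul_sum]
        exact Finset.sum_congr rfl fun i _ => by ring }

private lemma exp_mulVec_fixed {B : Matrix (Fin N) (Fin N) ℝ} {v : Fin N → ℝ}
    (hBv : B *ᵥ v = 0) : exp B *ᵥ v = v := by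
  have hsum : Summable fun n : ℕ => (n.factorial : ℝ)⁻¹ • B ^ n := expSeries_summable' B
  have h1 : exp B *ᵥ v = mvCLM v (exp B) := rfl
  rw [h1, exp_eq_tsum ℝ, (mvCLM v).map_tsum hsum]
  have h2 : ∀ n : ℕ, mvCLM v ((n.factorial : ℝ)⁻¹ • B ^ n) = (n.factorial : ℝ)⁻¹ • (B ^ n *ᵥ v) := by
    intro n; exact (mvCLM v).map_smul _ _
  simp_rw [h2]
  rw [tsum_eq_single 0]
  · simp
  · intro n hn
    obtain ⟨m, rfl⟩ := Nat.exists_eq_succ_of_ne_zero hn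
    rw [pow_succ, ← Matrix.mulVec_mulVec, hBv, Matrix.mulVec_zero, smul_zero]

private lemma exp_vecMul_fixed {B : Matrix (Fin N) (Fin N) ℝ} {ξ : Fin N → ℝ}
    (hξB : ξ ᵥ* B = 0) : ξ ᵥ* exp B = ξ := by
  have hsum : Summable fun n : ℕ => (n.factorial : ℝ)⁻¹ • B ^ n := expSeries_summable' B
  have h1 : ξ ᵥ* exp B = vmCLM ξ (exp B) := rfl
  rw [h1, exp_eq_tsum ℝ, (vmCLM ξ).map_tsum hsum]
  have h2 : ∀ n : ℕ, vmCLM ξ ((n.factorial : ℝ)⁻¹ • B ^ n) = (n.factorial : ℝ)⁻¹ • (ξ ᵥ* B ^ n) := by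
    intro n; exact (vmCLM ξ).map_smul _ _
  simp_rw [h2]
  rw [tsum_eq_single 0]
  · simp
  · intro n hn
    obtain ⟨m, rfl⟩ := Nat.exists_eq_succ_of_ne_zero hn
    rw [pow_succ', ← Matrix.vecMul_vecMul, hξB, Matrix.zero_vecMul, smul_zero]

private lemma exp_real_smul_one (r : ℝ) :
    exp (r • (1 : Matrix (Fin N) (Fin N) ℝ)) = Real.exp r • (1 : Matrix (Fin N) (Fin N) ℝ) := by
  have h1 : r • (1 : Matrix (Fin N) (Fin N) ℝ) = Matrix.diagonal (fun _ => r) := by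
    ext i j
    by_cases h : i = j <;> simp [Matrix.one_apply, Matrix.diagonal, h]
  have h2 : Real.exp r • (1 : Matrix (Fin N) (Fin N) ℝ)
      = Matrix.diagonal (fun _ => Real.exp r) := by
    ext i j
    by_cases h : i = j <;> simp [Matrix.one_apply, Matrix.diagonal, h]
  rw [h1, h2, Matrix.exp_diagonal]
  have h3 : (exp fun _ : Fin N => r) = fun _ : Fin N => Real.exp r := by
    funext i
    rw [Pi.exp_def, Real.exp_eq_exp_ℝ]
  rw [h3]

private noncomputable def ΨCLM :
    Matrix (Fin N) (Fin N) ℝ →L[ℝ] (Fin N → ℝ) →L[ℝ] (Fin N → ℝ) :=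
  LinearMap.toContinuousLinearMap
    { toFun := fun A => LinearMap.toContinuousLinearMap (Matrix.mulVecLin A)
      map_add' := fun A B => by
        ext v
        simp [Matrix.add_mulVec]
      map_smul' := fun c A => by
        ext v
        simp [Matrix.smul_mulVec] }

private lemma ΨCLM_apply (A : Matrix (Fin N) (Fin N) ℝ) (v : Fin N → ℝ) :
    ΨCLM A v = A *ᵥ v := rfl

private lemma sol_eq (M : Matrix (Fin N) (Fin N) ℝ) (y : ℝ → Fin N → ℝ)
    (hy : ∀ t, HasDerivAt y (-(M *ᵥ y t)) t) (t : ℝ) :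
    y t = exp (-(t • M)) *ᵥ y 0 := by
  set g : ℝ → Fin N → ℝ := fun s => ΨCLM (exp (s • M)) (y s) with hg
  have hgderiv : ∀ s : ℝ, HasDerivAt g 0 s := by
    intro s
    have hexp : HasDerivAt (fun u : ℝ => exp (u • M)) (exp (s • M) * M) s :=
      hasDerivAt_exp_smul_const M s
    have hc : HasDerivAt (fun u : ℝ => ΨCLM (exp (u • M))) (ΨCLM (exp (s • M) * M)) s :=
      (ΨCLM.hasFDerivAt).comp_hasDerivAt s hexp
    have h := hc.clm_apply (hy s)
    have hval : ΨCLM (exp (s • M) * M) (y s) + ΨCLM (exp (s • M)) (-(M *ᵥ y s)) = 0 := by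
      rw [ΨCLM_apply, ΨCLM_apply]
      rw [Matrix.mulVec_neg, ← Matrix.mulVec_mulVec]
      exact add_neg_cancel _
    rw [hval] at h
    exact h
  have hconst : ∀ s : ℝ, g s = g 0 := by
    intro s
    refine is_const_of_fderiv_eq_zero (fun u => (hgderiv u).differentiableAt) ?_ s 0
    intro u
    have h2 : HasFDerivAt g ((1 : ℝ →L[ℝ] ℝ).smulRight (0 : Fin N → ℝ)) u :=
      (hgderiv u).hasFDerivAt
    have h3 : ((1 : ℝ →L[ℝ] ℝ).smulRight (0 : Fin N → ℝ)) = 0 :=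
      ContinuousLinearMap.ext fun x => by simp
    rw [h3] at h2
    exact h2.fderiv
  have h0 : g 0 = y 0 := by
    rw [hg]
    simp only [zero_smul, exp_zero, ΨCLM_apply, Matrix.one_mulVec]
  have ht := (hconst t).trans h0
  rw [hg] at ht
  simp only [ΨCLM_apply] at ht
  have hinv : exp (-(t • M)) * exp (t • M) = 1 := by
    rw [← Matrix.exp_add_of_commute _ _ ((Commute.refl (t • M)).neg_left), neg_add_cancel, exp_zero]
  calc y t = (exp (-(t • M)) * exp (t • M)) *ᵥ y t := by rw [hinv, Matrix.one_mulVec]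
    _ = exp (-(t • M)) *ᵥ (exp (t • M) *ᵥ y t) := by rw [Matrix.mulVec_mulVec]
    _ = exp (-(t • M)) *ᵥ y 0 := by rw [ht]

set_option maxHeartbeats 1000000 in
theorem stmt17 {N : ℕ} (L : Matrix (Fin N) (Fin N) ℝ)
    -- L is a signed Laplacian
    (hlap : ∀ i, L i i = ∑ j, if j ≠ i then |L i j| else 0)
    -- G(L) strongly connected
    (hSC : StronglyConnected (fun j i : Fin N => i ≠ j ∧ L i j ≠ 0))
    -- structurally balanced with bipartition f (edge sign = sgn(-l_ij))
    (f : Fin N → Bool)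
    (hbal : ∀ i j, i ≠ j → L i j ≠ 0 → (f i = f j ↔ L i j < 0))
    -- at least one negative edge
    (hneg : ∃ i j, i ≠ j ∧ 0 < L i j) :
    -- D L D is an ordinary Laplacian of a strongly connected digraph
    (∀ i j, i ≠ j →
      (Matrix.diagonal (fun i : Fin N => if f i then (1 : ℝ) else -1) * L *
        Matrix.diagonal (fun i : Fin N => if f i then (1 : ℝ) else -1)) i j ≤ 0) ∧
    (∀ i, ∑ j,
      (Matrix.diagonal (fun i : Fin N => if f i then (1 : ℝ) else -1) * L *
        Matrix.diagonal (fun i : Fin N => if f i then (1 : ℝ) else -1)) i j = 0) ∧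
    StronglyConnected (fun j i : Fin N => i ≠ j ∧
      (Matrix.diagonal (fun i : Fin N => if f i then (1 : ℝ) else -1) * L *
        Matrix.diagonal (fun i : Fin N => if f i then (1 : ℝ) else -1)) i j ≠ 0) ∧
    -- convergence of every solution of ẋ = -L x to c · D 𝟙, and polarization
    ∃ ξ : Fin N → ℝ, (∀ i, 0 ≤ ξ i) ∧
      ξ ᵥ* (Matrix.diagonal (fun i : Fin N => if f i then (1 : ℝ) else -1) * L *
        Matrix.diagonal (fun i : Fin N => if f i then (1 : ℝ) else -1)) = 0 ∧
      ∑ i, ξ i = 1 ∧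
      (∀ x : ℝ → (Fin N → ℝ), (∀ t, HasDerivAt x (-(L *ᵥ x t)) t) →
        Tendsto x atTop (nhds
          ((ξ ⬝ᵥ (Matrix.diagonal (fun i : Fin N => if f i then (1 : ℝ) else -1) *ᵥ x 0)) •
            (Matrix.diagonal (fun i : Fin N => if f i then (1 : ℝ) else -1) *ᵥ
              fun _ => 1)))) ∧
      -- for almost all initial conditions the limit value is nonzero
      (∀ᵐ x0 : Fin N → ℝ ∂volume,
        ξ ⬝ᵥ (Matrix.diagonal (fun i : Fin N => if f i then (1 : ℝ) else -1) *ᵥ x0) ≠ 0) := by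
  classical
  obtain ⟨i0, j0, hij0, hLpos⟩ := hneg
  haveI : Nonempty (Fin N) := ⟨i0⟩
  set d : Fin N → ℝ := fun i : Fin N => if f i then (1 : ℝ) else -1 with hd
  set D := Matrix.diagonal d with hD
  set M := D * L * D with hM
  -- basic facts about d, D, M
  have hd2 : ∀ i, d i * d i = 1 := by
    intro i; by_cases h : f i <;> simp [hd, h]
  have hMentry : ∀ i j, M i j = d i * L i j * d j := by
    intro i j
    rw [hM, hD, Matrix.mul_diagonal, Matrix.diagonal_mul]
  have hMoff : ∀ i j, i ≠ j → M i j = -|L i j| := by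
    intro i j hij
    rw [hMentry i j]
    rcases eq_or_ne (L i j) 0 with h0 | h0
    · simp [h0]
    · have hrw : d i * L i j * d j = (d i * d j) * L i j := by ring
      rw [hrw]
      by_cases hfe : f i = f j
      · have hlt : L i j < 0 := (hbal i j hij h0).1 hfe
        have hdd : d i * d j = 1 := by
          by_cases h : f j <;> simp [hd, hfe, h]
        rw [hdd, one_mul, abs_of_neg hlt, neg_neg]
      · have hgt : 0 < L i j := by
          rcases h0.lt_or_gt with h | h
          · exact absurd ((hbal i j hij h0).2 h) hfe
          · exact h
        have hdd : d i * d j = -1 := by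
          by_cases h : f i <;> by_cases h' : f j <;> simp [hd, h, h'] <;> simp_all
        rw [hdd, abs_of_pos hgt]; ring
  have hMdiag : ∀ i, M i i = L i i := by
    intro i
    rw [hMentry i i, mul_comm (d i) (L i i), mul_assoc, hd2 i, mul_one]
  have hLdiag : ∀ i, L i i = ∑ j ∈ Finset.univ.erase i, |L i j| := by
    intro i
    rw [hlap i, ← Finset.sum_filter, Finset.filter_ne']
  have hrow : ∀ i, ∑ j, M i j = 0 := by
    intro i
    rw [← Finset.add_sum_erase _ _ (Finset.mem_univ i), hMdiag i]
    have h1 : ∑ j ∈ Finset.univ.erase i, M i j = ∑ j ∈ Finset.univ.erase i, -|L i j| :=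
      Finset.sum_congr rfl fun j hj => hMoff i j (Ne.symm (Finset.ne_of_mem_erase hj))
    rw [h1, Finset.sum_neg_distrib, hLdiag i, add_neg_cancel]
  have part1 : ∀ i j, i ≠ j → M i j ≤ 0 := by
    intro i j hij
    rw [hMoff i j hij]
    exact neg_nonpos.2 (abs_nonneg _)
  have hMne : ∀ i j, i ≠ j → (M i j ≠ 0 ↔ L i j ≠ 0) := by
    intro i j hij
    rw [hMoff i j hij]
    simp
  have part3 : StronglyConnected (fun j i : Fin N => i ≠ j ∧ M i j ≠ 0) := by
    intro a b
    refine Relation.ReflTransGen.mono (r := fun j i : Fin N => i ≠ j ∧ L i j ≠ 0) (p := fun j i : Fin N => i ≠ j ∧ M i j ≠ 0) ?_ a b (hSC a b)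
    intro u v huv
    exact ⟨huv.1, (hMne v u huv.1).2 huv.2⟩
  have hdiagpos : ∀ i, 0 < M i i := by
    intro i
    obtain ⟨a, ha⟩ : ∃ a : Fin N, a ≠ i := by
      rcases eq_or_ne i0 i with rfl | h
      · exact ⟨j0, Ne.symm hij0⟩
      · exact ⟨i0, h⟩
    rcases Relation.ReflTransGen.cases_tail (hSC a i) with heq | ⟨c, _, hc⟩
    · exact absurd heq.symm ha
    · rw [hMdiag i, hLdiag i]
      have hmem : c ∈ Finset.univ.erase i := Finset.mem_erase.2 ⟨Ne.symm hc.1, Finset.mem_univ c⟩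
      exact lt_of_lt_of_le (abs_pos.2 hc.2)
        (Finset.single_le_sum (fun j _ => abs_nonneg (L i j)) hmem)
  have hM1 : M *ᵥ (fun _ : Fin N => (1:ℝ)) = 0 := by
    funext i
    simpa [Matrix.mulVec, dotProduct] using hrow i
  -- the auxiliary nonnegative matrix A = c0 • 1 - M
  set c0 : ℝ := 1 + ∑ k, M k k with hc0
  set A : Matrix (Fin N) (Fin N) ℝ := c0 • (1 : Matrix (Fin N) (Fin N) ℝ) - M with hA0
  have hc0gt : ∀ i, M i i < c0 := by
    intro i
    have h1 : M i i ≤ ∑ k, M k k :=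
      Finset.single_le_sum (fun k _ => (hdiagpos k).le) (Finset.mem_univ i)
    rw [hc0]; linarith
  have hAentry : ∀ i j, A i j = (if i = j then c0 else 0) - M i j := by
    intro i j
    rw [hA0]
    simp [Matrix.sub_apply, Matrix.smul_apply, Matrix.one_apply, mul_ite, mul_one, mul_zero]
  have hAnn : ∀ i j, 0 ≤ A i j := by
    intro i j
    rw [hAentry]
    by_cases h : i = j
    · subst h; rw [if_pos rfl]; linarith [hc0gt i]
    · rw [if_neg h]; have := part1 i j h; linarith
  have hAdiag : ∀ i, 0 < A i i := by
    intro i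
    rw [hAentry, if_pos rfl]
    linarith [hc0gt i]
  have hAedge : ∀ i j, i ≠ j → L i j ≠ 0 → 0 < A i j := by
    intro i j hij hL
    rw [hAentry, if_neg hij, hMoff i j hij]
    simpa using abs_pos.2 hL
  have hApow : ∀ (n : ℕ) (i j : Fin N), 0 ≤ (A ^ n) i j := pow_entry_nonneg hAnn
  have hkey : ∀ a b : Fin N, Relation.ReflTransGen (fun j i : Fin N => i ≠ j ∧ L i j ≠ 0) a b →
      ∃ k : ℕ, 0 < (A ^ k) b a := by
    intro a b h
    induction h with
    | refl => exact ⟨0, by simp [Matrix.one_apply]⟩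
    | @tail b c hab hbc ih =>
        obtain ⟨k, hk⟩ := ih
        refine ⟨k + 1, ?_⟩
        rw [pow_succ', Matrix.mul_apply]
        exact lt_of_lt_of_le (mul_pos (hAedge c b hbc.1 hbc.2) hk)
          (Finset.single_le_sum (fun x _ => mul_nonneg (hAnn c x) (hApow k x a))
            (Finset.mem_univ b))
  have hstep : ∀ (k : ℕ) (i j : Fin N), 0 < (A ^ k) i j → 0 < (A ^ (k + 1)) i j := by
    intro k i j hk
    rw [pow_succ, Matrix.mul_apply]
    exact lt_of_lt_of_le (mul_pos hk (hAdiag j))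
      (Finset.single_le_sum (fun x _ => mul_nonneg (hApow k i x) (hAnn x j))
        (Finset.mem_univ j))
  have hmono : ∀ (k m : ℕ), k ≤ m → ∀ i j : Fin N, 0 < (A ^ k) i j → 0 < (A ^ m) i j := by
    intro k m hkm
    induction m, hkm using Nat.le_induction with
    | base => exact fun i j h => h
    | succ n hn ih => exact fun i j h => hstep n i j (ih i j h)
  have hexists : ∀ i j : Fin N, ∃ k, 0 < (A ^ k) i j := fun i j => hkey j i (hSC j i)
  choose kf hkf using hexists
  have hKpos : ∀ i j : Fin N, 0 < (A ^ (Finset.univ.sup fun p : Fin N × Fin N => kf p.1 p.2)) i j := by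
    intro i j
    exact hmono (kf i j) _
      (Finset.le_sup (f := fun p : Fin N × Fin N => kf p.1 p.2) (Finset.mem_univ (i, j)))
      i j (hkf i j)
  set K := Finset.univ.sup fun p : Fin N × Fin N => kf p.1 p.2 with hK
  -- the semigroup S t = exp(-(t • M))
  set S : ℝ → Matrix (Fin N) (Fin N) ℝ := fun t => exp (-(t • M)) with hS
  have hdecomp : ∀ t : ℝ, -(t • M) = t • A + (-(t * c0)) • (1 : Matrix (Fin N) (Fin N) ℝ) := by
    intro t
    rw [hA0, smul_sub, smul_smul, neg_smul]
    abel
  have hSdecomp : ∀ t : ℝ, S t = exp (t • A) * (Real.exp (-(t * c0)) • (1 : Matrix (Fin N) (Fin N) ℝ)) := by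
    intro t
    show exp (-(t • M)) = _
    rw [hdecomp t, Matrix.exp_add_of_commute _ _ ((Commute.one_right (t • A)).smul_right _),
      exp_real_smul_one]
  have hSentry : ∀ (t : ℝ) (i j : Fin N), S t i j = Real.exp (-(t * c0)) * exp (t • A) i j := by
    intro t i j
    rw [hSdecomp t, Matrix.mul_smul, mul_one, Matrix.smul_apply, smul_eq_mul]
  have hSnn : ∀ t : ℝ, 0 ≤ t → ∀ i j, 0 ≤ S t i j := by
    intro t ht i j
    rw [hSentry]
    refine mul_nonneg (Real.exp_nonneg _) (exp_entry_nonneg (fun i j => ?_) i j)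
    rw [Matrix.smul_apply, smul_eq_mul]
    exact mul_nonneg ht (hAnn i j)
  have hS1pos : ∀ i j, 0 < S 1 i j := by
    intro i j
    rw [hSentry]
    refine mul_pos (Real.exp_pos _) ?_
    rw [one_smul]
    exact exp_entry_pos hAnn (hKpos i j)
  have hSrow : ∀ t : ℝ, S t *ᵥ (fun _ : Fin N => (1:ℝ)) = (fun _ : Fin N => (1:ℝ)) := by
    intro t
    apply exp_mulVec_fixed
    rw [Matrix.neg_mulVec, Matrix.smul_mulVec, hM1, smul_zero, neg_zero]
  have hSrowsum : ∀ (t : ℝ) (i : Fin N), ∑ j, S t i j = 1 := by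
    intro t i
    have h := congr_fun (hSrow t) i
    simpa [Matrix.mulVec, dotProduct] using h
  -- kernel vector of Mᵀ
  have hones_ne : (fun _ : Fin N => (1:ℝ)) ≠ 0 := by
    intro h
    exact one_ne_zero (congr_fun h i0)
  have hdet : M.det = 0 := Matrix.exists_mulVec_eq_zero_iff.1 ⟨_, hones_ne, hM1⟩
  have hdetT : Mᵀ.det = 0 := by rw [Matrix.det_transpose]; exact hdet
  obtain ⟨ξ0, hξ0ne, hξ0⟩ := Matrix.exists_mulVec_eq_zero_iff.2 hdetT
  have hξ0M : ξ0 ᵥ* M = 0 := by rw [← Matrix.mulVec_transpose]; exact hξ0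
  have hfix : ξ0 ᵥ* S 1 = ξ0 := by
    apply exp_vecMul_fixed
    rw [one_smul, Matrix.vecMul_neg, hξ0M, neg_zero]
  -- the vector of absolute values is also fixed
  set η : Fin N → ℝ := fun i => |ξ0 i| with hη
  have hvm : ∀ (v : Fin N → ℝ) (j : Fin N), (v ᵥ* S 1) j = ∑ i, v i * S 1 i j := by
    intro v j
    simp [Matrix.vecMul, dotProduct]
  have hle : ∀ j, η j ≤ (η ᵥ* S 1) j := by
    intro j
    calc η j = |(ξ0 ᵥ* S 1) j| := by rw [hfix]
      _ = |∑ i, ξ0 i * S 1 i j| := by rw [hvm]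
      _ ≤ ∑ i, |ξ0 i * S 1 i j| := Finset.abs_sum_le_sum_abs _ _
      _ = ∑ i, η i * S 1 i j :=
          Finset.sum_congr rfl fun i _ => by rw [abs_mul, abs_of_pos (hS1pos i j)]
      _ = (η ᵥ* S 1) j := (hvm η j).symm
  have hsums : ∑ j, (η ᵥ* S 1) j = ∑ j, η j := by
    simp_rw [hvm η]
    rw [Finset.sum_comm]
    refine Finset.sum_congr rfl fun i _ => ?_
    rw [← Finset.mul_sum, hSrowsum 1 i, mul_one]
  have heq : ∀ j, η j = (η ᵥ* S 1) j := by
    have h := (Finset.sum_eq_sum_iff_of_le (fun j _ => hle j)).1 hsums.symm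
    exact fun j => h j (Finset.mem_univ j)
  have hsign : (∀ i, 0 ≤ ξ0 i) ∨ (∀ i, ξ0 i ≤ 0) := by
    by_contra hcon
    push_neg at hcon
    obtain ⟨⟨p, hp'⟩, ⟨q, hq'⟩⟩ := hcon
    have hAbs : |∑ i, ξ0 i * S 1 i i0| = ∑ i, η i * S 1 i i0 := by
      have h1 : (∑ i, η i * S 1 i i0) = (η ᵥ* S 1) i0 := (hvm η i0).symm
      rw [h1, ← heq i0, ← hvm ξ0 i0, hfix]
    have hstrict1 : ∑ i, ξ0 i * S 1 i i0 < ∑ i, η i * S 1 i i0 := by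
      refine Finset.sum_lt_sum (fun i _ => mul_le_mul_of_nonneg_right (le_abs_self _) (hS1pos i i0).le)
        ⟨p, Finset.mem_univ p, ?_⟩
      refine mul_lt_mul_of_pos_right ?_ (hS1pos p i0)
      exact lt_of_lt_of_le hp' (abs_nonneg _)
    have hstrict2 : -(∑ i, ξ0 i * S 1 i i0) < ∑ i, η i * S 1 i i0 := by
      rw [← Finset.sum_neg_distrib]
      refine Finset.sum_lt_sum (fun i _ => ?_) ⟨q, Finset.mem_univ q, ?_⟩
      · rw [← neg_mul]
        exact mul_le_mul_of_nonneg_right (neg_le_abs _) (hS1pos i i0).le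
      · rw [← neg_mul]
        refine mul_lt_mul_of_pos_right ?_ (hS1pos q i0)
        show -ξ0 q < |ξ0 q|
        rw [abs_of_pos hq']
        linarith
    have hlt : |∑ i, ξ0 i * S 1 i i0| < ∑ i, η i * S 1 i i0 :=
      abs_lt.2 ⟨by linarith, hstrict1⟩
    exact absurd hAbs (ne_of_lt hlt)
  obtain ⟨ξ1, hξ1nn, hξ1M, hξ1ne⟩ :
      ∃ ξ1 : Fin N → ℝ, (∀ i, 0 ≤ ξ1 i) ∧ ξ1 ᵥ* M = 0 ∧ ξ1 ≠ 0 := by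
    rcases hsign with h | h
    · exact ⟨ξ0, h, hξ0M, hξ0ne⟩
    · refine ⟨-ξ0, fun i => by simpa using h i, ?_, neg_ne_zero.2 hξ0ne⟩
      rw [Matrix.neg_vecMul, hξ0M, neg_zero]
  have hs0pos : 0 < ∑ i, ξ1 i := by
    rcases (Finset.sum_nonneg (fun i (_ : i ∈ Finset.univ) => hξ1nn i)).lt_or_eq with h | h
    · exact h
    · exfalso
      apply hξ1ne
      funext i
      have := (Finset.sum_eq_zero_iff_of_nonneg (fun i (_ : i ∈ Finset.univ) => hξ1nn i)).1 h.symm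
        i (Finset.mem_univ i)
      simpa using this
  set s0 : ℝ := ∑ i, ξ1 i with hs0
  set ξ : Fin N → ℝ := s0⁻¹ • ξ1 with hξdef
  have hξnn : ∀ i, 0 ≤ ξ i := by
    intro i
    have : ξ i = s0⁻¹ * ξ1 i := rfl
    rw [this]
    exact mul_nonneg (inv_nonneg.2 hs0pos.le) (hξ1nn i)
  have hξM : ξ ᵥ* M = 0 := by
    rw [hξdef, Matrix.smul_vecMul, hξ1M, smul_zero]
  have hξsum : ∑ i, ξ i = 1 := by
    rw [hξdef]
    simp only [Pi.smul_apply, smul_eq_mul]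
    rw [← Finset.mul_sum, ← hs0, inv_mul_cancel₀ hs0pos.ne']
  refine ⟨part1, hrow, part3, ξ, hξnn, hξM, hξsum, ?_, ?_⟩
  · -- convergence of solutions
    intro x hx
    set y : ℝ → Fin N → ℝ := fun t => D *ᵥ x t with hy
    have hDD : D * D = 1 := by
      rw [hD, Matrix.diagonal_mul_diagonal]
      have h1 : (fun i => d i * d i) = fun _ : Fin N => (1:ℝ) := funext hd2
      rw [h1, Matrix.diagonal_one]
    have hMD : M * D = D * L := by
      rw [hM, mul_assoc (D * L) D D, hDD, mul_one]
    have hyD : ∀ t, HasDerivAt y (-(M *ᵥ y t)) t := by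
      intro t
      have hclm := ((Matrix.mulVecLin D).toContinuousLinearMap.hasFDerivAt
        (x := x t)).comp_hasDerivAt t (hx t)
      have h1 : (Matrix.mulVecLin D).toContinuousLinearMap (-(L *ᵥ x t)) = -(M *ᵥ y t) := by
        show D *ᵥ (-(L *ᵥ x t)) = -(M *ᵥ y t)
        rw [Matrix.mulVec_neg]
        congr 1
        show D *ᵥ (L *ᵥ x t) = M *ᵥ (D *ᵥ x t)
        rw [Matrix.mulVec_mulVec, Matrix.mulVec_mulVec, hMD]
      rw [h1] at hclm
      exact hclm
    have hysol : ∀ t, y t = S t *ᵥ y 0 := fun t => sol_eq M y hyD t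
    have hξfix : ∀ t : ℝ, ξ ᵥ* S t = ξ := by
      intro t
      apply exp_vecMul_fixed
      have h1 : ξ ᵥ* (t • M) = t • (ξ ᵥ* M) := by
        funext j
        simp only [Matrix.vecMul, dotProduct, Matrix.smul_apply, Pi.smul_apply,
          smul_eq_mul, Finset.mul_sum]
        exact Finset.sum_congr rfl fun i _ => by ring
      rw [Matrix.vecMul_neg, h1, hξM, smul_zero, neg_zero]
    set cv : ℝ := ξ ⬝ᵥ y 0 with hcv
    have hyc : ∀ t, ξ ⬝ᵥ y t = cv := by
      intro t
      rw [hysol t, dotProduct_mulVec, hξfix t, hcv]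
    -- sup and inf
    have hne : (Finset.univ : Finset (Fin N)).Nonempty := Finset.univ_nonempty
    set Mx : (Fin N → ℝ) → ℝ := fun w => Finset.univ.sup' hne w with hMxdef
    set mn : (Fin N → ℝ) → ℝ := fun w => Finset.univ.inf' hne w with hmndef
    have hle_Mx : ∀ (w : Fin N → ℝ) (i : Fin N), w i ≤ Mx w :=
      fun w i => Finset.le_sup' w (Finset.mem_univ i)
    have hmn_le : ∀ (w : Fin N → ℝ) (i : Fin N), mn w ≤ w i :=
      fun w i => Finset.inf'_le w (Finset.mem_univ i)
    have hstoch : ∀ T : Matrix (Fin N) (Fin N) ℝ, (∀ i j, 0 ≤ T i j) → (∀ i, ∑ j, T i j = 1) →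
        ∀ (w : Fin N → ℝ) (i : Fin N), mn w ≤ (T *ᵥ w) i ∧ (T *ᵥ w) i ≤ Mx w := by
      intro T hTnn hTrow w i
      have happ : (T *ᵥ w) i = ∑ j, T i j * w j := by
        simp [Matrix.mulVec, dotProduct]
      constructor
      · rw [happ]
        calc mn w = (∑ j, T i j) * mn w := by rw [hTrow i, one_mul]
          _ = ∑ j, T i j * mn w := Finset.sum_mul _ _ _
          _ ≤ ∑ j, T i j * w j :=
              Finset.sum_le_sum fun j _ => mul_le_mul_of_nonneg_left (hmn_le w j) (hTnn i j)
      · rw [happ]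
        calc ∑ j, T i j * w j ≤ ∑ j, T i j * Mx w :=
              Finset.sum_le_sum fun j _ => mul_le_mul_of_nonneg_left (hle_Mx w j) (hTnn i j)
          _ = (∑ j, T i j) * Mx w := (Finset.sum_mul _ _ _).symm
          _ = Mx w := by rw [hTrow i, one_mul]
    have hxi_mem : ∀ w : Fin N → ℝ, mn w ≤ ξ ⬝ᵥ w ∧ ξ ⬝ᵥ w ≤ Mx w := by
      intro w
      have happ : ξ ⬝ᵥ w = ∑ i, ξ i * w i := rfl
      constructor
      · rw [happ]
        calc mn w = ∑ i, ξ i * mn w := by rw [← Finset.sum_mul, hξsum, one_mul]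
          _ ≤ ∑ i, ξ i * w i :=
              Finset.sum_le_sum fun i _ => mul_le_mul_of_nonneg_left (hmn_le w i) (hξnn i)
      · rw [happ]
        calc ∑ i, ξ i * w i ≤ ∑ i, ξ i * Mx w :=
              Finset.sum_le_sum fun i _ => mul_le_mul_of_nonneg_left (hle_Mx w i) (hξnn i)
          _ = Mx w := by rw [← Finset.sum_mul, hξsum, one_mul]
    have hsemi : ∀ s t : ℝ, S (s + t) = S s * S t := by
      intro s t
      show exp (-((s + t) • M)) = exp (-(s • M)) * exp (-(t • M))
      rw [add_smul, neg_add]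
      exact Matrix.exp_add_of_commute _ _
        ((((Commute.refl M).smul_left s).smul_right t).neg_left.neg_right)
    have hband : ∀ (n : ℕ) (t : ℝ), (n : ℝ) ≤ t →
        ∀ i, mn (y n) ≤ y t i ∧ y t i ≤ Mx (y n) := by
      intro n t hnt i
      have h1 : S t = S (t - n) * S (n : ℝ) := by
        rw [← hsemi]
        norm_num
      have hyt : y t = S (t - (n:ℝ)) *ᵥ y n := by
        rw [hysol t, h1, ← Matrix.mulVec_mulVec, ← hysol (n:ℝ)]
      rw [hyt]
      exact hstoch _ (hSnn _ (by linarith)) (hSrowsum _) (y (n:ℝ)) i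
    -- contraction constant
    have hne2 : (Finset.univ : Finset (Fin N × Fin N)).Nonempty := Finset.univ_nonempty
    set δ : ℝ := Finset.univ.inf' hne2 (fun p : Fin N × Fin N => S 1 p.1 p.2) with hδdef
    have hδle : ∀ i j, δ ≤ S 1 i j := fun i j =>
      Finset.inf'_le _ (Finset.mem_univ (i, j))
    have hδpos : 0 < δ := by
      rw [hδdef]
      exact (Finset.lt_inf'_iff hne2).2 fun p _ => hS1pos p.1 p.2
    have h2δ : 2 * δ ≤ 1 := by
      have h1 : S 1 i0 i0 + S 1 i0 j0 ≤ ∑ j, S 1 i0 j := by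
        rw [← Finset.sum_pair hij0]
        exact Finset.sum_le_sum_of_subset_of_nonneg (Finset.subset_univ _)
          (fun j _ _ => (hS1pos i0 j).le)
      have h2 := hSrowsum 1 i0
      have h3 := hδle i0 i0
      have h4 := hδle i0 j0
      linarith
    have hcontr : ∀ w : Fin N → ℝ,
        Mx (S 1 *ᵥ w) - mn (S 1 *ᵥ w) ≤ (1 - 2 * δ) * (Mx w - mn w) := by
      intro w
      obtain ⟨jmin, -, hjmin⟩ := Finset.exists_mem_eq_inf' hne w
      obtain ⟨jmax, -, hjmax⟩ := Finset.exists_mem_eq_sup' hne w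
      have hsp : 0 ≤ Mx w - mn w := by
        have h1 := hmn_le w i0
        have h2 := hle_Mx w i0
        linarith
      have hrsum : ∀ i j, ∑ j' ∈ Finset.univ.erase j, S 1 i j' = 1 - S 1 i j := by
        intro i j
        have h1 := Finset.add_sum_erase Finset.univ (fun j' => S 1 i j') (Finset.mem_univ j)
        have h2 := hSrowsum 1 i
        linarith
      have happ : ∀ i, (S 1 *ᵥ w) i = ∑ j, S 1 i j * w j := by
        intro i
        simp [Matrix.mulVec, dotProduct]
      have hup : ∀ i, (S 1 *ᵥ w) i ≤ Mx w - δ * (Mx w - mn w) := by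
        intro i
        have hsplit : ∑ j, S 1 i j * w j
            = S 1 i jmin * w jmin + ∑ j ∈ Finset.univ.erase jmin, S 1 i j * w j :=
          (Finset.add_sum_erase _ _ (Finset.mem_univ jmin)).symm
        have hrest : ∑ j ∈ Finset.univ.erase jmin, S 1 i j * w j
            ≤ ∑ j ∈ Finset.univ.erase jmin, S 1 i j * Mx w :=
          Finset.sum_le_sum fun j _ => mul_le_mul_of_nonneg_left (hle_Mx w j) (hS1pos i j).le
        have hcalc : ∑ j ∈ Finset.univ.erase jmin, S 1 i j * Mx w
            = Mx w - S 1 i jmin * Mx w := by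
          rw [← Finset.sum_mul, hrsum i jmin]; ring
        have hwmin : w jmin = mn w := hjmin.symm
        rw [hwmin] at hsplit
        have hprod : δ * Mx w - δ * mn w ≤ S 1 i jmin * Mx w - S 1 i jmin * mn w := by
          have h9 : δ * (Mx w - mn w) ≤ S 1 i jmin * (Mx w - mn w) :=
            mul_le_mul_of_nonneg_right (hδle i jmin) hsp
          nlinarith [h9]
        rw [happ i]
        linarith [hsplit, hrest, hcalc, hprod]
      have hdown : ∀ i, mn w + δ * (Mx w - mn w) ≤ (S 1 *ᵥ w) i := by
        intro i
        have hsplit : ∑ j, S 1 i j * w j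
            = S 1 i jmax * w jmax + ∑ j ∈ Finset.univ.erase jmax, S 1 i j * w j :=
          (Finset.add_sum_erase _ _ (Finset.mem_univ jmax)).symm
        have hrest : ∑ j ∈ Finset.univ.erase jmax, S 1 i j * mn w
            ≤ ∑ j ∈ Finset.univ.erase jmax, S 1 i j * w j :=
          Finset.sum_le_sum fun j _ => mul_le_mul_of_nonneg_left (hmn_le w j) (hS1pos i j).le
        have hcalc : ∑ j ∈ Finset.univ.erase jmax, S 1 i j * mn w
            = mn w - S 1 i jmax * mn w := by
          rw [← Finset.sum_mul, hrsum i jmax]; ring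
        have hwmax : w jmax = Mx w := hjmax.symm
        rw [hwmax] at hsplit
        have hprod : δ * Mx w - δ * mn w ≤ S 1 i jmax * Mx w - S 1 i jmax * mn w := by
          have h9 : δ * (Mx w - mn w) ≤ S 1 i jmax * (Mx w - mn w) :=
            mul_le_mul_of_nonneg_right (hδle i jmax) hsp
          nlinarith [h9]
        rw [happ i]
        linarith [hsplit, hrest, hcalc, hprod]
      have hMxle : Mx (S 1 *ᵥ w) ≤ Mx w - δ * (Mx w - mn w) :=
        Finset.sup'_le hne _ fun i _ => hup i
      have hmnge : mn w + δ * (Mx w - mn w) ≤ mn (S 1 *ᵥ w) :=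
        Finset.le_inf' hne _ fun i _ => hdown i
      linarith
    have hq0 : 0 ≤ 1 - 2 * δ := by linarith
    have hq1 : 1 - 2 * δ < 1 := by linarith
    have hstep2 : ∀ n : ℕ,
        Mx (y ((n:ℝ) + 1)) - mn (y ((n:ℝ) + 1))
          ≤ (1 - 2 * δ) * (Mx (y (n:ℝ)) - mn (y (n:ℝ))) := by
      intro n
      have h1 : y ((n:ℝ) + 1) = S 1 *ᵥ y (n:ℝ) := by
        have h2 : ((n:ℝ) + 1) = (1:ℝ) + (n:ℝ) := by ring
        rw [h2, hysol ((1:ℝ) + (n:ℝ)), hsemi 1 (n:ℝ), ← Matrix.mulVec_mulVec, ← hysol (n:ℝ)]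
      rw [h1]
      exact hcontr (y (n:ℝ))
    have hgeo : ∀ n : ℕ,
        Mx (y (n:ℝ)) - mn (y (n:ℝ)) ≤ (1 - 2 * δ) ^ n * (Mx (y 0) - mn (y 0)) := by
      intro n
      induction n with
      | zero => simp
      | succ m ih =>
          have h1 := hstep2 m
          have h2 : ((m + 1 : ℕ) : ℝ) = (m : ℝ) + 1 := by push_cast; ring
          rw [h2]
          calc Mx (y ((m:ℝ) + 1)) - mn (y ((m:ℝ) + 1))
              ≤ (1 - 2 * δ) * (Mx (y (m:ℝ)) - mn (y (m:ℝ))) := h1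
            _ ≤ (1 - 2 * δ) * ((1 - 2 * δ) ^ m * (Mx (y 0) - mn (y 0))) :=
                mul_le_mul_of_nonneg_left ih hq0
            _ = (1 - 2 * δ) ^ (m + 1) * (Mx (y 0) - mn (y 0)) := by ring
    have hcoord : ∀ i, Tendsto (fun t => y t i) atTop (nhds cv) := by
      intro i
      rw [Metric.tendsto_atTop]
      intro ε hε
      have htend : Tendsto (fun n : ℕ => (1 - 2 * δ) ^ n * (Mx (y 0) - mn (y 0)))
          atTop (nhds 0) := by
        have h1 := (tendsto_pow_atTop_nhds_zero_of_lt_one hq0 hq1).mul_const (Mx (y 0) - mn (y 0))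
        rw [zero_mul] at h1
        exact h1
      obtain ⟨n, hn⟩ := (htend.eventually_lt_const hε).exists
      refine ⟨(n : ℝ), fun t ht => ?_⟩
      have hb := hband n t ht i
      have hcmem : mn (y (n:ℝ)) ≤ cv ∧ cv ≤ Mx (y (n:ℝ)) := by
        have h1 := hxi_mem (y (n:ℝ))
        rw [hyc (n:ℝ)] at h1
        exact h1
      have hoscn : Mx (y (n:ℝ)) - mn (y (n:ℝ)) < ε := lt_of_le_of_lt (hgeo n) hn
      rw [Real.dist_eq]
      exact abs_sub_lt_iff.2 ⟨by linarith [hb.2, hcmem.1], by linarith [hb.1, hcmem.2]⟩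
    have hylim : Tendsto y atTop (nhds (cv • (fun _ : Fin N => (1:ℝ)))) := by
      rw [tendsto_pi_nhds]
      intro i
      have h1 : (cv • (fun _ : Fin N => (1:ℝ))) i = cv := by
        rw [Pi.smul_apply, smul_eq_mul, mul_one]
      rw [h1]
      exact hcoord i
    have hcont := (((Matrix.mulVecLin D).toContinuousLinearMap.continuous.tendsto
      (cv • (fun _ : Fin N => (1:ℝ)))).comp hylim)
    have hval : (Matrix.mulVecLin D).toContinuousLinearMap (cv • (fun _ : Fin N => (1:ℝ)))
        = (ξ ⬝ᵥ (D *ᵥ x 0)) • (D *ᵥ fun _ : Fin N => (1:ℝ)) := by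
      show D *ᵥ (cv • fun _ : Fin N => (1:ℝ)) = _
      rw [Matrix.mulVec_smul]
    rw [hval] at hcont
    refine Tendsto.congr (fun t => ?_) hcont
    show D *ᵥ y t = x t
    show D *ᵥ (D *ᵥ x t) = x t
    rw [Matrix.mulVec_mulVec, hDD, Matrix.one_mulVec]
  · -- almost everywhere nonzero
    set φ : (Fin N → ℝ) →ₗ[ℝ] ℝ :=
      { toFun := fun v => ξ ⬝ᵥ (D *ᵥ v)
        map_add' := fun a b => by
          show ξ ⬝ᵥ (D *ᵥ (a + b)) = ξ ⬝ᵥ (D *ᵥ a) + ξ ⬝ᵥ (D *ᵥ b)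
          rw [Matrix.mulVec_add, dotProduct_add]
        map_smul' := fun c a => by
          show ξ ⬝ᵥ (D *ᵥ (c • a)) = c • (ξ ⬝ᵥ (D *ᵥ a))
          rw [Matrix.mulVec_smul, dotProduct_smul] } with hφ
    have hDD : D * D = 1 := by
      rw [hD, Matrix.diagonal_mul_diagonal]
      have h1 : (fun i => d i * d i) = fun _ : Fin N => (1:ℝ) := funext hd2
      rw [h1, Matrix.diagonal_one]
    have hφever : φ (D *ᵥ fun _ : Fin N => (1:ℝ)) = 1 := by
      show ξ ⬝ᵥ (D *ᵥ (D *ᵥ fun _ : Fin N => (1:ℝ))) = 1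
      rw [Matrix.mulVec_mulVec, hDD, Matrix.one_mulVec]
      simpa [dotProduct] using hξsum
    have hker : LinearMap.ker φ ≠ ⊤ := by
      intro h
      have hmem : (D *ᵥ fun _ : Fin N => (1:ℝ)) ∈ LinearMap.ker φ := by
        rw [h]; trivial
      rw [LinearMap.mem_ker, hφever] at hmem
      exact one_ne_zero hmem
    have h0 : volume ((LinearMap.ker φ : Submodule ℝ (Fin N → ℝ)) : Set (Fin N → ℝ)) = 0 :=
      MeasureTheory.Measure.addHaar_submodule _ _ hker
    rw [MeasureTheory.ae_iff]
    have hsets : {x0 : Fin N → ℝ | ¬ ξ ⬝ᵥ (D *ᵥ x0) ≠ 0}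
        = ((LinearMap.ker φ : Submodule ℝ (Fin N → ℝ)) : Set (Fin N → ℝ)) := by
      ext v
      simp only [Set.mem_setOf_eq, not_not, SetLike.mem_coe, LinearMap.mem_ker]
      rfl
    rw [hsets]
    exact h0

end Stmt17Aux
end
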